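/- arXiv:1112.1350 — 3 statements merged into one kernel-verified Lean document; each statement's English description precedes it below -/
import Mathlib

section
/- Let X be a compact topological space, D a dense subset of X, and N a compact subset of the space C(X, ℂ) of continuous complex-valued functions on X with the supremum norm. If g ∈ C(X, ℂ) satisfies inf_{f ∈ N} sup_{x ∈ X} |g(x) − f(x)| > ε, then there exists a finite subset F ⊆ D such that inf_{f ∈ N} max_{x ∈ F} |g(x) − f(x)| > ε. -/
/-- Let `X` be compact, `D ⊆ X` dense and `N ⊆ C(X, ℂ)` compact.  If
`g ∈ C(X, ℂ)` is at distance `> ε` from `N` (in the sup norm), then there is a finite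
set `F ⊆ D` witnessing this: every `f ∈ N` differs from `g` by more than `ε` at some
point of `F`. -/
theorem statement2 {X : Type*} [TopologicalSpace X] [CompactSpace X]
    (D : Set X) (hD : Dense D) (N : Set C(X, ℂ)) (hN : IsCompact N)
    (g : C(X, ℂ)) (ε : ℝ) (hε : 0 < ε)
    (h : ∀ f ∈ N, ε < ‖g - f‖) :
    ∃ F : Finset X, ↑F ⊆ D ∧ ∀ f ∈ N, ∃ x ∈ F, ε < ‖g x - f x‖ := by
  set U : D → Set C(X, ℂ) := fun d => {f | ε < ‖g d.1 - f d.1‖} with hU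
  have hUopen : ∀ d : D, IsOpen (U d) := by
    intro d
    have hc : Continuous fun f : C(X, ℂ) => ‖g d.1 - f d.1‖ :=
      (continuous_const.sub (continuous_eval_const d.1)).norm
    exact isOpen_lt continuous_const hc
  have hcover : N ⊆ ⋃ d : D, U d := by
    intro f hf
    have hfn := h f hf
    -- find x with ε < ‖g x - f x‖
    have hx : ∃ x : X, ε < ‖g x - f x‖ := by
      by_contra hcon
      push_neg at hcon
      have : ‖g - f‖ ≤ ε := ContinuousMap.norm_le _ hε.le |>.mpr (by
        intro x
        simpa using hcon x)
      linarith
    obtain ⟨x, hx⟩ := hx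
    have hopen : IsOpen {y : X | ε < ‖g y - f y‖} :=
      isOpen_lt continuous_const ((g.continuous.sub f.continuous).norm)
    obtain ⟨d, hdD, hd⟩ := hD.exists_mem_open hopen ⟨x, hx⟩
    exact Set.mem_iUnion.mpr ⟨⟨d, hdD⟩, hd⟩
  classical
  obtain ⟨t, ht⟩ := hN.elim_finite_subcover U hUopen hcover
  refine ⟨t.image Subtype.val, ?_, ?_⟩
  · intro x hx
    simp only [Finset.coe_image, Set.mem_image] at hx
    obtain ⟨d, _, rfl⟩ := hx
    exact d.2
  · intro f hf
    obtain ⟨d, hd⟩ := Set.mem_iUnion.mp (ht hf)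
    simp only [Set.mem_iUnion] at hd
    obtain ⟨hdt, hdu⟩ := hd
    exact ⟨d.1, Finset.mem_image_of_mem _ hdt, hdu⟩
end

section
/- Let G be a group (regarded as a discrete topological group). Assume there exist a finite subset F ⊆ G and ε > 0 such that for every n ≥ 1, every irreducible homomorphism σ : G → U(n) that is not constantly equal to the identity matrix, and every f ∈ P_σ, one has max_{x ∈ F} |f(x) − 1| ≥ ε. Then for every n ≥ 1 the set of equivalence classes of irreducible homomorphisms G → U(n) is finite. (This is the statement that if the trivial representation is isolated in the set of finite-dimensional irreducible representations of a discrete group in the Fell topology, then Ĝ_n is finite for all n.) -/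
open scoped ComplexInnerProductSpace
open scoped Matrix

/-- The action of a unitary matrix on Euclidean space. -/
noncomputable def matAct {n : ℕ} (A : Matrix.unitaryGroup (Fin n) ℂ)
    (v : EuclideanSpace ℂ (Fin n)) : EuclideanSpace ℂ (Fin n) :=
  Matrix.toEuclideanLin (A : Matrix (Fin n) (Fin n) ℂ) v

/-- The coefficient function `g ↦ ⟪ρ(g)v, v⟫` of a finite-dimensional unitary
representation. -/
noncomputable def coeffFn {G : Type*} [Group G] {n : ℕ}
    (ρ : G →* Matrix.unitaryGroup (Fin n) ℂ) (v : EuclideanSpace ℂ (Fin n)) (g : G) : ℂ :=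
  ⟪matAct (ρ g) v, v⟫

/-- `P_ρ`: the set of all finite sums of coefficient functions of `ρ`. -/
def posTypeFns {G : Type*} [Group G] {n : ℕ}
    (ρ : G →* Matrix.unitaryGroup (Fin n) ℂ) : Set (G → ℂ) :=
  {f | ∃ (k : ℕ) (v : Fin k → EuclideanSpace ℂ (Fin n)),
    f = fun g => ∑ i, coeffFn ρ (v i) g}

/-- A finite-dimensional unitary representation is irreducible if the only invariant
subspaces are `⊥` and `⊤`. -/
def IsIrreducibleRep {G : Type*} [Group G] {n : ℕ}
    (ρ : G →* Matrix.unitaryGroup (Fin n) ℂ) : Prop :=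
  ∀ W : Submodule ℂ (EuclideanSpace ℂ (Fin n)),
    (∀ g : G, ∀ w ∈ W, matAct (ρ g) w ∈ W) → W = ⊥ ∨ W = ⊤

/-- Equivalence of finite-dimensional unitary representations, witnessed by a linear
isometric isomorphism intertwining them. -/
def RepEquiv {G : Type*} [Group G] {n m : ℕ}
    (ρ : G →* Matrix.unitaryGroup (Fin n) ℂ) (σ : G →* Matrix.unitaryGroup (Fin m) ℂ) : Prop :=
  ∃ M : EuclideanSpace ℂ (Fin n) ≃ₗᵢ[ℂ] EuclideanSpace ℂ (Fin m),
    ∀ (g : G) (v : EuclideanSpace ℂ (Fin n)), M (matAct (ρ g) v) = matAct (σ g) (M v)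

/-- The normalized character `g ↦ trace ρ(g) / n` of a representation `ρ : G → U(n)`. -/
noncomputable def normChar {G : Type*} [Group G] {n : ℕ}
    (ρ : G →* Matrix.unitaryGroup (Fin n) ℂ) (g : G) : ℂ :=
  (ρ g : Matrix (Fin n) (Fin n) ℂ).trace / n

section infra
variable {n : ℕ}

lemma toEuclideanLin_mul (A B : Matrix (Fin n) (Fin n) ℂ) (v : EuclideanSpace ℂ (Fin n)) :
    Matrix.toEuclideanLin (A * B) v = Matrix.toEuclideanLin A (Matrix.toEuclideanLin B v) := by
  simp [Matrix.toEuclideanLin_apply, Matrix.mulVec_mulVec]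

lemma toEuclideanLin_one (v : EuclideanSpace ℂ (Fin n)) :
    Matrix.toEuclideanLin (1 : Matrix (Fin n) (Fin n) ℂ) v = v := by
  simp [Matrix.toEuclideanLin_apply]

lemma matAct_mul (A B : Matrix.unitaryGroup (Fin n) ℂ) (v : EuclideanSpace ℂ (Fin n)) :
    matAct (A * B) v = matAct A (matAct B v) := by
  simp [matAct, toEuclideanLin_mul]

lemma matAct_one (v : EuclideanSpace ℂ (Fin n)) : matAct (1 : Matrix.unitaryGroup (Fin n) ℂ) v = v := by
  simp [matAct, toEuclideanLin_one]

lemma inner_matAct_matAct (A : Matrix.unitaryGroup (Fin n) ℂ) (v w : EuclideanSpace ℂ (Fin n)) :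
    ⟪matAct A v, matAct A w⟫ = ⟪v, w⟫ := by
  have h1 : Matrix.toEuclideanLin ((A : Matrix (Fin n) (Fin n) ℂ)ᴴ) =
      LinearMap.adjoint (Matrix.toEuclideanLin (A : Matrix (Fin n) (Fin n) ℂ)) :=
    Matrix.toEuclideanLin_conjTranspose_eq_adjoint _
  calc ⟪matAct A v, matAct A w⟫
      = ⟪v, LinearMap.adjoint (Matrix.toEuclideanLin (A : Matrix (Fin n) (Fin n) ℂ))
          (matAct A w)⟫ := by
        rw [LinearMap.adjoint_inner_right]; rfl
    _ = ⟪v, w⟫ := by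
        rw [← h1]
        congr 1
        have : (A : Matrix (Fin n) (Fin n) ℂ)ᴴ * A = 1 := by
          simpa [Matrix.star_eq_conjTranspose] using A.2.1
        rw [matAct, ← toEuclideanLin_mul, this, toEuclideanLin_one]

/-- matrices are determined by their action -/
lemma unitary_ext_of_matAct {A B : Matrix.unitaryGroup (Fin n) ℂ}
    (h : ∀ v, matAct A v = matAct B v) : A = B := by
  apply Subtype.ext
  exact Matrix.toEuclideanLin.injective (LinearMap.ext h)

/-- The unitary matrix associated to a linear isometric automorphism of Euclidean space. -/
noncomputable def isoToUnitary {m : ℕ}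
    (T : EuclideanSpace ℂ (Fin m) ≃ₗᵢ[ℂ] EuclideanSpace ℂ (Fin m)) :
    Matrix.unitaryGroup (Fin m) ℂ := by
  refine ⟨Matrix.toEuclideanLin.symm (T.toLinearEquiv : EuclideanSpace ℂ (Fin m) →ₗ[ℂ] _), ?_⟩
  rw [Matrix.mem_unitaryGroup_iff']
  apply Matrix.toEuclideanLin.injective
  apply LinearMap.ext
  intro v
  rw [Matrix.star_eq_conjTranspose]
  rw [show ((Matrix.toEuclideanLin.symm (T.toLinearEquiv : EuclideanSpace ℂ (Fin m) →ₗ[ℂ] _))ᴴ *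
    (Matrix.toEuclideanLin.symm (T.toLinearEquiv : EuclideanSpace ℂ (Fin m) →ₗ[ℂ] _)) :
      Matrix (Fin m) (Fin m) ℂ) = _ from rfl]
  rw [toEuclideanLin_mul, Matrix.toEuclideanLin_conjTranspose_eq_adjoint,
    LinearEquiv.apply_symm_apply, toEuclideanLin_one]
  apply ext_inner_right ℂ
  intro w
  rw [LinearMap.adjoint_inner_left]
  show ⟪T v, T w⟫ = _
  rw [LinearIsometryEquiv.inner_map_map]

lemma matAct_isoToUnitary {m : ℕ}
    (T : EuclideanSpace ℂ (Fin m) ≃ₗᵢ[ℂ] EuclideanSpace ℂ (Fin m)) (v : EuclideanSpace ℂ (Fin m)) :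
    matAct (isoToUnitary T) v = T v := by
  show Matrix.toEuclideanLin (Matrix.toEuclideanLin.symm _) v = _
  rw [LinearEquiv.apply_symm_apply]
  rfl

end infra

section reps
variable {G : Type*} [Group G]
variable {E : Type*} [NormedAddCommGroup E] [InnerProductSpace ℂ E]

lemma rep_apply_mul (π : G →* (E ≃ₗᵢ[ℂ] E)) (g h : G) (v : E) :
    π (g * h) v = π g (π h v) := by
  rw [map_mul]; rfl

lemma rep_apply_inv (π : G →* (E ≃ₗᵢ[ℂ] E)) (g : G) (v : E) :
    π g (π g⁻¹ v) = v := by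
  rw [← rep_apply_mul, mul_inv_cancel, map_one]; rfl

/-- Restriction of a linear isometric automorphism to an invariant subspace. -/
noncomputable def restrictIso (T : E ≃ₗᵢ[ℂ] E) (Tinv : E ≃ₗᵢ[ℂ] E) (W : Submodule ℂ E)
    (h1 : ∀ w ∈ W, T w ∈ W) (h2 : ∀ w ∈ W, Tinv w ∈ W)
    (hTi : ∀ w, T (Tinv w) = w) (hiT : ∀ w, Tinv (T w) = w) : W ≃ₗᵢ[ℂ] W where
  toFun w := ⟨T w, h1 w w.2⟩
  invFun w := ⟨Tinv w, h2 w w.2⟩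
  map_add' a b := by ext; simp
  map_smul' c a := by ext; simp
  left_inv a := by ext; simp [hiT]
  right_inv a := by ext; simp [hTi]
  norm_map' a := T.norm_map a

/-- Restriction of a unitary representation to an invariant subspace. -/
noncomputable def restrictRep (π : G →* (E ≃ₗᵢ[ℂ] E)) (W : Submodule ℂ E)
    (hW : ∀ g : G, ∀ w ∈ W, π g w ∈ W) : G →* (W ≃ₗᵢ[ℂ] W) :=
  MonoidHom.mk' (fun g => restrictIso (π g) (π g⁻¹) W (hW g) (hW g⁻¹)
      (fun w => rep_apply_inv π g w)
      (fun w => by simpa using rep_apply_inv π g⁻¹ w))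
    (by
      intro g h
      apply LinearIsometryEquiv.ext
      intro w
      ext
      show π (g * h) w = π g (π h (w : E))
      rw [rep_apply_mul])

lemma restrictRep_apply (π : G →* (E ≃ₗᵢ[ℂ] E)) (W : Submodule ℂ E)
    (hW : ∀ g : G, ∀ w ∈ W, π g w ∈ W) (g : G) (w : W) :
    (restrictRep π W hW g w : E) = π g (w : E) := rfl

/-- Conjugating a representation by a linear isometric equivalence. -/
noncomputable def conjRep {E' : Type*} [NormedAddCommGroup E'] [InnerProductSpace ℂ E']
    (π : G →* (E ≃ₗᵢ[ℂ] E)) (e : E ≃ₗᵢ[ℂ] E') : G →* (E' ≃ₗᵢ[ℂ] E') :=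
  MonoidHom.mk' (fun g => (e.symm.trans (π g)).trans e)
    (by
      intro g h
      apply LinearIsometryEquiv.ext
      intro w
      show e (π (g*h) (e.symm w)) = e (π g (e.symm (e (π h (e.symm w)))))
      rw [e.symm_apply_apply, rep_apply_mul])

lemma conjRep_apply {E' : Type*} [NormedAddCommGroup E'] [InnerProductSpace ℂ E']
    (π : G →* (E ≃ₗᵢ[ℂ] E)) (e : E ≃ₗᵢ[ℂ] E') (g : G) (w : E') :
    conjRep π e g w = e (π g (e.symm w)) := rfl

end reps

/-- Matrix representation from an isometric representation of Euclidean space. -/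
noncomputable def matrixRep {G : Type*} [Group G] {m : ℕ}
    (ρ : G →* (EuclideanSpace ℂ (Fin m) ≃ₗᵢ[ℂ] EuclideanSpace ℂ (Fin m))) :
    G →* Matrix.unitaryGroup (Fin m) ℂ :=
  MonoidHom.mk' (fun g => isoToUnitary (ρ g)) (by
    intro g h
    apply unitary_ext_of_matAct
    intro v
    rw [matAct_mul, matAct_isoToUnitary, matAct_isoToUnitary, matAct_isoToUnitary, map_mul]
    rfl)

lemma matAct_matrixRep {G : Type*} [Group G] {m : ℕ}
    (ρ : G →* (EuclideanSpace ℂ (Fin m) ≃ₗᵢ[ℂ] EuclideanSpace ℂ (Fin m))) (g : G)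
    (v : EuclideanSpace ℂ (Fin m)) : matAct (matrixRep ρ g) v = ρ g v :=
  matAct_isoToUnitary _ _

/-- Invariance of the orthogonal complement. -/
lemma orthoInv {G : Type*} [Group G] {E : Type*} [NormedAddCommGroup E]
    [InnerProductSpace ℂ E] (π : G →* (E ≃ₗᵢ[ℂ] E)) (U : Submodule ℂ E)
    (hU : ∀ g : G, ∀ w ∈ U, π g w ∈ U) : ∀ g : G, ∀ w ∈ Uᗮ, π g w ∈ Uᗮ := by
  intro g w hw
  rw [Submodule.mem_orthogonal]
  intro y hy
  have h1 : ⟪y, π g w⟫ = ⟪π g⁻¹ y, w⟫ := by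
    conv_lhs => rw [← rep_apply_inv π g y]
    exact (π g).inner_map_map _ _
  rw [h1]
  exact hw _ (hU g⁻¹ y hy)

noncomputable def dseq (ε : ℝ) : ℕ → ℝ
  | 0 => min ε 1
  | (N+1) => min ε (dseq ε N ^ 2 / 4)

lemma dseq_pos {ε : ℝ} (hε : 0 < ε) : ∀ N, 0 < dseq ε N := by
  intro N
  induction N with
  | zero => exact lt_min hε one_pos
  | succ N ih => exact lt_min hε (by positivity)

lemma dseq_le {ε : ℝ} : ∀ N, dseq ε N ≤ ε := by
  intro N
  cases N with
  | zero => exact min_le_left _ _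
  | succ N => exact min_le_left _ _

set_option maxHeartbeats 1000000 in
lemma lemC {G : Type*} [Group G] (F : Finset G) (ε : ℝ) (hε : 0 < ε)
    (h : ∀ n : ℕ, 1 ≤ n → ∀ σ : G →* Matrix.unitaryGroup (Fin n) ℂ,
      IsIrreducibleRep σ → σ ≠ 1 →
      ∀ f ∈ posTypeFns σ, ∃ x ∈ F, ε ≤ ‖f x - 1‖) :
    ∀ N : ℕ, ∀ (E : Type) [NormedAddCommGroup E] [InnerProductSpace ℂ E]
      [FiniteDimensional ℂ E], Module.finrank ℂ E ≤ N →
      ∀ π : G →* (E ≃ₗᵢ[ℂ] E), (∀ w : E, (∀ g : G, π g w = w) → w = 0) →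
      ∀ v : E, ‖v‖ = 1 → ∃ x ∈ F, dseq ε N ≤ ‖⟪π x v, v⟫ - 1‖ := by
  intro N
  induction N with
  | zero =>
    intro E _ _ _ hrank π hfix v hv
    exfalso
    have hsub : Subsingleton E := by
      have h0 : Module.finrank ℂ E = 0 := Nat.le_zero.mp hrank
      exact Module.finrank_zero_iff.mp h0
    rw [Subsingleton.elim v 0, norm_zero] at hv
    exact one_ne_zero hv.symm
  | succ N ih =>
    intro E _ _ _ hrank π hfix v hv
    have hv0 : v ≠ 0 := by
      intro h0; rw [h0, norm_zero] at hv; exact one_ne_zero hv.symm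
    by_cases hirr : ∀ W : Submodule ℂ E, (∀ g : G, ∀ w ∈ W, π g w ∈ W) → W = ⊥ ∨ W = ⊤
    · -- irreducible case
      have hnt : Nontrivial E := ⟨v, 0, hv0⟩
      have hm1 : 1 ≤ Module.finrank ℂ E := Module.finrank_pos
      set m := Module.finrank ℂ E with hmdef
      let e : E ≃ₗᵢ[ℂ] EuclideanSpace ℂ (Fin m) := (stdOrthonormalBasis ℂ E).repr
      let σ : G →* Matrix.unitaryGroup (Fin m) ℂ := matrixRep (conjRep π e)
      have hact : ∀ (g : G) (w : EuclideanSpace ℂ (Fin m)),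
          matAct (σ g) w = e (π g (e.symm w)) := by
        intro g w
        rw [show σ g = matrixRep (conjRep π e) g from rfl, matAct_matrixRep, conjRep_apply]
      have hσirr : IsIrreducibleRep σ := by
        intro W hW
        have hpre := hirr (W.comap (e.toLinearEquiv : E →ₗ[ℂ] EuclideanSpace ℂ (Fin m)))
          (by
            intro g w hw
            rw [Submodule.mem_comap] at hw ⊢
            have h2 := hW g (e w) hw
            rw [hact g (e w), e.symm_apply_apply] at h2
            exact h2)
        rcases hpre with hbot | htop
        · left
          rw [Submodule.eq_bot_iff]
          intro u hu
          have h3 : e.symm u ∈ W.comap (e.toLinearEquiv : E →ₗ[ℂ] EuclideanSpace ℂ (Fin m)) := by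
            rw [Submodule.mem_comap]
            show e (e.symm u) ∈ W
            rwa [e.apply_symm_apply]
          rw [hbot, Submodule.mem_bot] at h3
          have : u = e 0 := by rw [← h3, e.apply_symm_apply]
          simpa using this
        · right
          rw [Submodule.eq_top_iff']
          intro u
          have h3 : e.symm u ∈ (⊤ : Submodule ℂ E) := Submodule.mem_top
          rw [← htop, Submodule.mem_comap] at h3
          show u ∈ W
          have : e (e.symm u) ∈ W := h3
          rwa [e.apply_symm_apply] at this
      have hσ1 : σ ≠ 1 := by
        intro h1
        apply hv0
        apply hfix
        intro g
        have h2 := hact g (e (π g v))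
        have h3 : σ g = 1 := by rw [h1]; rfl
        rw [h3, matAct_one, e.symm_apply_apply] at h2
        have h4 := hact g (e v)
        rw [h3, matAct_one, e.symm_apply_apply] at h4
        -- h4 : e v = e (π g v)
        have := e.injective h4
        exact this.symm
      have hf : (fun g => ∑ i : Fin 1, coeffFn σ ((fun _ => e v) i) g) ∈ posTypeFns σ :=
        ⟨1, fun _ => e v, rfl⟩
      obtain ⟨x, hxF, hxd⟩ := h m hm1 σ hσirr hσ1 _ hf
      refine ⟨x, hxF, ?_⟩
      have hfx : (∑ i : Fin 1, coeffFn σ ((fun _ : Fin 1 => e v) i) x) = ⟪π x v, v⟫ := by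
        rw [Fin.sum_univ_one]
        show ⟪matAct (σ x) (e v), e v⟫ = ⟪π x v, v⟫
        rw [hact x (e v), e.symm_apply_apply, e.inner_map_map]
      rw [hfx] at hxd
      exact le_trans (dseq_le _) hxd
    · -- reducible case
      push_neg at hirr
      obtain ⟨W, hWinv, hWbot, hWtop⟩ := hirr
      have key : ∀ U : Submodule ℂ E, (∀ g : G, ∀ w ∈ U, π g w ∈ U) → U ≠ ⊤ →
          (1/2 : ℝ) ≤ ‖(Submodule.orthogonalProjectionOnto U v : E)‖^2 →
          ∃ x ∈ F, dseq ε (N+1) ≤ ‖⟪π x v, v⟫ - 1‖ := by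
        intro U hUinv hUtop hUc
        set v₁ : E := (Submodule.orthogonalProjectionOnto U v : E) with hv₁def
        set v₂ : E := v - v₁ with hv₂def
        have hv₂mem : v₂ ∈ Uᗮ := Submodule.sub_starProjection_mem_orthogonal v
        have hv₁mem : v₁ ∈ U := (Submodule.orthogonalProjectionOnto U v).2
        set c₁ : ℝ := ‖v₁‖^2 with hc₁def
        set c₂ : ℝ := ‖v₂‖^2 with hc₂def
        have hsum : c₁ + c₂ = 1 := by
          have h5 := Submodule.norm_sq_eq_add_norm_sq_projection v U
          rw [hv, one_pow] at h5
          have h6 : ((Submodule.orthogonalProjectionOnto Uᗮ) v : E) = v₂ := by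
            rw [Submodule.orthogonalProjection_orthogonal v]; rfl
          have e1 : ‖(Submodule.orthogonalProjectionOnto U) v‖ = ‖v₁‖ := rfl
          have e2 : ‖(Submodule.orthogonalProjectionOnto Uᗮ) v‖ = ‖v₂‖ := by rw [← h6]; rfl
          rw [e1, e2] at h5
          rw [hc₁def, hc₂def]
          linarith
        have hc₁pos : (0:ℝ) < c₁ := lt_of_lt_of_le one_half_pos hUc
        have hv₁0 : v₁ ≠ 0 := by
          intro h0
          rw [h0, norm_zero] at hc₁def
          simp at hc₁def
          rw [hc₁def] at hc₁pos
          exact lt_irrefl 0 hc₁pos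
        have hnv₁pos : (0:ℝ) < ‖v₁‖ := norm_pos_iff.mpr hv₁0
        let πU := restrictRep π U hUinv
        have hfixU : ∀ w : U, (∀ g : G, πU g w = w) → w = 0 := by
          intro w hw
          have h7 : (w : E) = 0 := by
            apply hfix
            intro g
            have := hw g
            have h8 : ((πU g w : U) : E) = ((w : U) : E) := by rw [this]
            rwa [restrictRep_apply] at h8
          exact Subtype.ext h7
        have hrankU : Module.finrank ℂ U ≤ N := by
          have hlt : Module.finrank ℂ U < Module.finrank ℂ E :=
            Submodule.finrank_lt hUtop
          omega
        set u : U := ((‖v₁‖⁻¹ : ℝ) : ℂ) • (⟨v₁, hv₁mem⟩ : U) with hudef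
        have hu : ‖u‖ = 1 := by
          rw [hudef, norm_smul]
          have h9 : ‖(⟨v₁, hv₁mem⟩ : U)‖ = ‖v₁‖ := rfl
          rw [h9]
          simp [abs_of_pos (inv_pos.mpr hnv₁pos)]
          field_simp
        obtain ⟨x, hxF, hxd⟩ := ih U hrankU πU hfixU u hu
        refine ⟨x, hxF, ?_⟩
        set z₁ : ℂ := ⟪π x v₁, v₁⟫ with hz₁def
        set z₂ : ℂ := ⟪π x v₂, v₂⟫ with hz₂def
        have hinner : ⟪πU x u, u⟫ = ((c₁⁻¹ : ℝ) : ℂ) * z₁ := by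
          rw [hudef, map_smul, inner_smul_left, inner_smul_right]
          have h10 : ⟪πU x (⟨v₁, hv₁mem⟩ : U), (⟨v₁, hv₁mem⟩ : U)⟫ = z₁ := by
            rw [hz₁def]
            rfl
          rw [h10]
          rw [Complex.conj_ofReal]
          rw [← mul_assoc, ← Complex.ofReal_mul]
          congr 1
          rw [hc₁def]
          norm_cast
          rw [pow_two, mul_inv]
        rw [hinner] at hxd
        -- hxd : dseq ε N ≤ ‖(c₁⁻¹:ℂ) * z₁ - 1‖
        have hz₁le : ‖z₁‖ ≤ c₁ := by
          calc ‖z₁‖ ≤ ‖π x v₁‖ * ‖v₁‖ := norm_inner_le_norm _ _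
            _ = ‖v₁‖ * ‖v₁‖ := by rw [(π x).norm_map]
            _ = c₁ := by rw [hc₁def]; ring
        have hz₂le : ‖z₂‖ ≤ c₂ := by
          calc ‖z₂‖ ≤ ‖π x v₂‖ * ‖v₂‖ := norm_inner_le_norm _ _
            _ = ‖v₂‖ * ‖v₂‖ := by rw [(π x).norm_map]
            _ = c₂ := by rw [hc₂def]; ring
        have hcross : ⟪π x v, v⟫ = z₁ + z₂ := by
          have hvsplit : v = v₁ + v₂ := by rw [hv₂def]; abel
          have hc1 : ⟪π x v₁, v₂⟫ = 0 := by
            have := hv₂mem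
            rw [Submodule.mem_orthogonal] at this
            exact this _ (hUinv x v₁ hv₁mem)
          have hc2 : ⟪π x v₂, v₁⟫ = 0 := by
            have h11 : π x v₂ ∈ Uᗮ := orthoInv π U hUinv x v₂ hv₂mem
            rw [Submodule.mem_orthogonal'] at h11
            exact h11 _ hv₁mem
          conv_lhs => rw [hvsplit]
          rw [map_add, inner_add_left, inner_add_right, inner_add_right, hc1, hc2]
          rw [hz₁def, hz₂def]
          ring
        rw [hcross]
        -- arithmetic
        have hd : dseq ε N ≤ ‖((c₁⁻¹ : ℝ) : ℂ) * z₁ - 1‖ := hxd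
        have hdpos : 0 < dseq ε N := dseq_pos hε N
        have hkey1 : c₁ * dseq ε N ≤ ‖z₁ - (c₁ : ℂ)‖ := by
          have h12 : ((c₁:ℝ) : ℂ) * (((c₁⁻¹ : ℝ) : ℂ) * z₁ - 1) = z₁ - (c₁ : ℂ) := by
            rw [mul_sub, mul_one, ← mul_assoc, ← Complex.ofReal_mul,
              mul_inv_cancel₀ (ne_of_gt hc₁pos)]
            simp
          have h12' : ‖z₁ - (c₁ : ℂ)‖ = c₁ * ‖((c₁⁻¹ : ℝ) : ℂ) * z₁ - 1‖ := by
            rw [← h12, norm_mul, Complex.norm_real, Real.norm_of_nonneg (le_of_lt hc₁pos)]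
          rw [h12']
          exact mul_le_mul_of_nonneg_left hd (le_of_lt hc₁pos)
        -- ‖z₁ - c₁‖² ≤ 2 c₁ (c₁ - re z₁)
        have habs : ∀ w : ℂ, ‖w‖^2 = w.re^2 + w.im^2 := by
          intro w
          rw [Complex.sq_norm, Complex.normSq_apply]
          ring
        have hre1 : ‖z₁ - (c₁ : ℂ)‖^2 ≤ 2 * c₁ * (c₁ - z₁.re) := by
          have ha : ‖z₁ - (c₁ : ℂ)‖^2 = (z₁.re - c₁)^2 + z₁.im^2 := by
            rw [habs]
            simp
          have hb : z₁.re^2 + z₁.im^2 ≤ c₁^2 := by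
            have h13 : ‖z₁‖^2 ≤ c₁^2 := pow_le_pow_left₀ (norm_nonneg _) hz₁le 2
            have h14 := habs z₁
            linarith
          nlinarith
        have hre2 : dseq ε N ^ 2 / 4 ≤ c₁ - z₁.re := by
          have h15 : (c₁ * dseq ε N)^2 ≤ 2 * c₁ * (c₁ - z₁.re) := by
            calc (c₁ * dseq ε N)^2 ≤ ‖z₁ - (c₁ : ℂ)‖^2 := by
                  apply pow_le_pow_left₀ (by positivity) hkey1
              _ ≤ 2 * c₁ * (c₁ - z₁.re) := hre1
          have hc₁le1 : c₁ ≤ 1 := by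
            have : 0 ≤ c₂ := sq_nonneg _
            linarith
          have hhalf : (1:ℝ)/2 ≤ c₁ := hUc
          have e16 : c₁ * (c₁ * dseq ε N ^ 2) ≤ c₁ * (2 * (c₁ - z₁.re)) := by
            nlinarith [h15]
          have e17 : c₁ * dseq ε N ^ 2 ≤ 2 * (c₁ - z₁.re) :=
            le_of_mul_le_mul_left e16 hc₁pos
          have e18 : (1/2 : ℝ) * dseq ε N ^ 2 ≤ c₁ * dseq ε N ^ 2 :=
            mul_le_mul_of_nonneg_right hhalf (sq_nonneg _)
          linarith
        have hre3 : z₂.re ≤ c₂ := by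
          calc z₂.re ≤ ‖z₂‖ := by
                exact Complex.re_le_norm z₂
            _ ≤ c₂ := hz₂le
        have hfinal : dseq ε N ^ 2 / 4 ≤ ‖z₁ + z₂ - 1‖ := by
          have h16 : (z₁ + z₂ - 1).re = z₁.re + z₂.re - 1 := by simp
          have h17 : (z₁ + z₂ - 1).re ≤ -(dseq ε N ^ 2 / 4) := by
            rw [h16]; linarith
          calc dseq ε N ^ 2 / 4 ≤ -((z₁ + z₂ - 1).re) := by linarith
            _ ≤ |(z₁ + z₂ - 1).re| := neg_le_abs _
            _ ≤ ‖z₁ + z₂ - 1‖ := by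
                exact Complex.abs_re_le_norm _
        calc dseq ε (N+1) ≤ dseq ε N ^ 2 / 4 := min_le_right _ _
          _ ≤ ‖z₁ + z₂ - 1‖ := hfinal
      have hsum2 : ‖(Submodule.orthogonalProjectionOnto W v : E)‖^2 + ‖(Submodule.orthogonalProjectionOnto Wᗮ v : E)‖^2
          = 1 := by
        have h5 := Submodule.norm_sq_eq_add_norm_sq_projection v W
        rw [hv, one_pow] at h5
        have e1 : ‖(Submodule.orthogonalProjectionOnto W) v‖ = ‖((Submodule.orthogonalProjectionOnto W) v : E)‖ := rfl
        have e2 : ‖(Submodule.orthogonalProjectionOnto Wᗮ) v‖ = ‖((Submodule.orthogonalProjectionOnto Wᗮ) v : E)‖ := rfl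
        rw [e1, e2] at h5
        linarith
      rcases le_total (1/2 : ℝ) (‖(Submodule.orthogonalProjectionOnto W v : E)‖^2) with hbig | hsmall
      · exact key W hWinv hWtop hbig
      · refine key Wᗮ (orthoInv π W hWinv) ?_ (by linarith)
        intro htop
        apply hWbot
        rw [← Submodule.orthogonal_orthogonal W, htop, Submodule.top_orthogonal_eq_bot]

section tensor
variable {n : ℕ}

noncomputable def toE (M : Matrix (Fin n) (Fin n) ℂ) : EuclideanSpace ℂ (Fin n × Fin n) :=
  (WithLp.equiv 2 _).symm (fun p => M p.1 p.2)

noncomputable def fromE (x : EuclideanSpace ℂ (Fin n × Fin n)) : Matrix (Fin n) (Fin n) ℂ :=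
  Matrix.of (fun i j => (WithLp.equiv 2 _) x (i, j))

lemma fromE_toE (M : Matrix (Fin n) (Fin n) ℂ) : fromE (toE M) = M := rfl

lemma toE_fromE (x : EuclideanSpace ℂ (Fin n × Fin n)) : toE (fromE x) = x := rfl

lemma toE_add (M N : Matrix (Fin n) (Fin n) ℂ) : toE (M + N) = toE M + toE N := rfl

lemma toE_smul (c : ℂ) (M : Matrix (Fin n) (Fin n) ℂ) : toE (c • M) = c • toE M := rfl

lemma fromE_add (x y : EuclideanSpace ℂ (Fin n × Fin n)) :
    fromE (x + y) = fromE x + fromE y := rfl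

lemma fromE_smul (c : ℂ) (x : EuclideanSpace ℂ (Fin n × Fin n)) :
    fromE (c • x) = c • fromE x := rfl

lemma inner_toE (M N : Matrix (Fin n) (Fin n) ℂ) :
    ⟪toE M, toE N⟫ = (Mᴴ * N).trace := by
  rw [PiLp.inner_apply]
  rw [Matrix.trace]
  rw [Fintype.sum_prod_type]
  rw [Finset.sum_comm]
  apply Finset.sum_congr rfl
  intro j _
  rw [Matrix.diag_apply, Matrix.mul_apply]
  apply Finset.sum_congr rfl
  intro i _
  rw [RCLike.inner_apply']
  show (starRingEnd ℂ) (M i j) * N i j = Mᴴ j i * N i j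
  rfl

lemma unitary_conjT_mul (U : Matrix.unitaryGroup (Fin n) ℂ) :
    (U : Matrix (Fin n) (Fin n) ℂ)ᴴ * U = 1 := by
  simpa [Matrix.star_eq_conjTranspose] using Unitary.star_mul_self_of_mem U.2

lemma unitary_mul_conjT (U : Matrix.unitaryGroup (Fin n) ℂ) :
    (U : Matrix (Fin n) (Fin n) ℂ) * (U : Matrix (Fin n) (Fin n) ℂ)ᴴ = 1 := by
  simpa [Matrix.star_eq_conjTranspose] using Unitary.mul_star_self_of_mem U.2

lemma coe_inv_unitary (U : Matrix.unitaryGroup (Fin n) ℂ) :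
    ((U⁻¹ : Matrix.unitaryGroup (Fin n) ℂ) : Matrix (Fin n) (Fin n) ℂ)
      = (U : Matrix (Fin n) (Fin n) ℂ)ᴴ := by
  rw [← Unitary.star_eq_inv]
  rfl

/-- The isometry `A ↦ S A Tᴴ` on the Hilbert–Schmidt space of matrices. -/
noncomputable def tensorIso (S T : Matrix.unitaryGroup (Fin n) ℂ) :
    EuclideanSpace ℂ (Fin n × Fin n) ≃ₗᵢ[ℂ] EuclideanSpace ℂ (Fin n × Fin n) where
  toFun x := toE ((S : Matrix (Fin n) (Fin n) ℂ) * fromE x * (T : Matrix (Fin n) (Fin n) ℂ)ᴴ)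
  invFun x := toE ((S : Matrix (Fin n) (Fin n) ℂ)ᴴ * fromE x * (T : Matrix (Fin n) (Fin n) ℂ))
  map_add' x y := by
    show toE ((S : Matrix (Fin n) (Fin n) ℂ) * fromE (x + y) * (T : Matrix (Fin n) (Fin n) ℂ)ᴴ)
      = toE ((S : Matrix (Fin n) (Fin n) ℂ) * fromE x * (T : Matrix (Fin n) (Fin n) ℂ)ᴴ)
        + toE ((S : Matrix (Fin n) (Fin n) ℂ) * fromE y * (T : Matrix (Fin n) (Fin n) ℂ)ᴴ)
    rw [fromE_add, Matrix.mul_add, Matrix.add_mul, toE_add]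
  map_smul' c x := by
    show toE ((S : Matrix (Fin n) (Fin n) ℂ) * fromE (c • x) * (T : Matrix (Fin n) (Fin n) ℂ)ᴴ)
      = c • toE ((S : Matrix (Fin n) (Fin n) ℂ) * fromE x * (T : Matrix (Fin n) (Fin n) ℂ)ᴴ)
    rw [fromE_smul, Matrix.mul_smul, Matrix.smul_mul, toE_smul]
  left_inv x := by
    simp only [fromE_toE]
    rw [show (S : Matrix (Fin n) (Fin n) ℂ)ᴴ *
        ((S : Matrix (Fin n) (Fin n) ℂ) * fromE x * (T : Matrix (Fin n) (Fin n) ℂ)ᴴ) *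
        (T : Matrix (Fin n) (Fin n) ℂ)
        = ((S : Matrix (Fin n) (Fin n) ℂ)ᴴ * (S : Matrix (Fin n) (Fin n) ℂ)) * fromE x *
          ((T : Matrix (Fin n) (Fin n) ℂ)ᴴ * (T : Matrix (Fin n) (Fin n) ℂ)) by
      simp only [Matrix.mul_assoc]]
    rw [unitary_conjT_mul, Matrix.one_mul, unitary_conjT_mul, Matrix.mul_one, toE_fromE]
  right_inv x := by
    simp only [fromE_toE]
    rw [show (S : Matrix (Fin n) (Fin n) ℂ) *
        ((S : Matrix (Fin n) (Fin n) ℂ)ᴴ * fromE x * (T : Matrix (Fin n) (Fin n) ℂ)) *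
        (T : Matrix (Fin n) (Fin n) ℂ)ᴴ
        = ((S : Matrix (Fin n) (Fin n) ℂ) * (S : Matrix (Fin n) (Fin n) ℂ)ᴴ) * fromE x *
          ((T : Matrix (Fin n) (Fin n) ℂ) * (T : Matrix (Fin n) (Fin n) ℂ)ᴴ) by
      simp only [Matrix.mul_assoc]]
    rw [unitary_mul_conjT, Matrix.one_mul, unitary_mul_conjT, Matrix.mul_one, toE_fromE]
  norm_map' x := by
    have hip : ⟪toE ((S : Matrix (Fin n) (Fin n) ℂ) * fromE x *
          (T : Matrix (Fin n) (Fin n) ℂ)ᴴ),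
        toE ((S : Matrix (Fin n) (Fin n) ℂ) * fromE x * (T : Matrix (Fin n) (Fin n) ℂ)ᴴ)⟫
        = ⟪toE (fromE x), toE (fromE x)⟫ := by
      rw [inner_toE, inner_toE]
      rw [Matrix.conjTranspose_mul, Matrix.conjTranspose_mul, Matrix.conjTranspose_conjTranspose]
      rw [show (T : Matrix (Fin n) (Fin n) ℂ) * ((fromE x)ᴴ * (S : Matrix (Fin n) (Fin n) ℂ)ᴴ) *
          ((S : Matrix (Fin n) (Fin n) ℂ) * fromE x * (T : Matrix (Fin n) (Fin n) ℂ)ᴴ)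
          = (T : Matrix (Fin n) (Fin n) ℂ) * ((fromE x)ᴴ *
            (((S : Matrix (Fin n) (Fin n) ℂ)ᴴ * (S : Matrix (Fin n) (Fin n) ℂ)) *
              (fromE x * (T : Matrix (Fin n) (Fin n) ℂ)ᴴ)) ) by
        simp only [Matrix.mul_assoc]]
      rw [unitary_conjT_mul, Matrix.one_mul]
      rw [show (T : Matrix (Fin n) (Fin n) ℂ) * ((fromE x)ᴴ * (fromE x *
          (T : Matrix (Fin n) (Fin n) ℂ)ᴴ))
          = (T : Matrix (Fin n) (Fin n) ℂ) * ((fromE x)ᴴ * fromE x) *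
            (T : Matrix (Fin n) (Fin n) ℂ)ᴴ by simp only [Matrix.mul_assoc]]
      rw [Matrix.trace_mul_comm, ← Matrix.mul_assoc, unitary_conjT_mul, Matrix.one_mul]
    have h1 : ‖toE ((S : Matrix (Fin n) (Fin n) ℂ) * fromE x *
        (T : Matrix (Fin n) (Fin n) ℂ)ᴴ)‖
        = ‖toE (fromE x)‖ := by
      rw [@norm_eq_sqrt_re_inner ℂ, @norm_eq_sqrt_re_inner ℂ _ _ _ _ (toE (fromE x)), hip]
    show ‖toE ((S : Matrix (Fin n) (Fin n) ℂ) * fromE x * (T : Matrix (Fin n) (Fin n) ℂ)ᴴ)‖ = ‖x‖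
    rw [h1, toE_fromE]

/-- The representation `A ↦ σ(g) A τ(g)ᴴ`. -/
noncomputable def tensorRep {G : Type*} [Group G] (σ τ : G →* Matrix.unitaryGroup (Fin n) ℂ) :
    G →* (EuclideanSpace ℂ (Fin n × Fin n) ≃ₗᵢ[ℂ] EuclideanSpace ℂ (Fin n × Fin n)) :=
  MonoidHom.mk' (fun g => tensorIso (σ g) (τ g)) (by
    intro g h
    apply LinearIsometryEquiv.ext
    intro x
    show toE ((σ (g*h) : Matrix (Fin n) (Fin n) ℂ) * fromE x * (τ (g*h) :
        Matrix (Fin n) (Fin n) ℂ)ᴴ)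
      = toE ((σ g : Matrix (Fin n) (Fin n) ℂ) *
          fromE (toE ((σ h : Matrix (Fin n) (Fin n) ℂ) * fromE x *
            (τ h : Matrix (Fin n) (Fin n) ℂ)ᴴ)) * (τ g : Matrix (Fin n) (Fin n) ℂ)ᴴ)
    rw [fromE_toE, map_mul σ, map_mul τ]
    congr 1
    rw [Submonoid.coe_mul, Submonoid.coe_mul, Matrix.conjTranspose_mul]
    simp only [Matrix.mul_assoc])

lemma tensorRep_apply {G : Type*} [Group G] (σ τ : G →* Matrix.unitaryGroup (Fin n) ℂ)
    (g : G) (M : Matrix (Fin n) (Fin n) ℂ) :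
    tensorRep σ τ g (toE M) = toE ((σ g : Matrix (Fin n) (Fin n) ℂ) * M *
      (τ g : Matrix (Fin n) (Fin n) ℂ)ᴴ) := by
  show toE (_ * fromE (toE M) * _) = _
  rw [fromE_toE]

end tensor

noncomputable def unitaryToIso {m : ℕ} (U : Matrix.unitaryGroup (Fin m) ℂ) :
    EuclideanSpace ℂ (Fin m) ≃ₗᵢ[ℂ] EuclideanSpace ℂ (Fin m) where
  toFun := matAct U
  invFun := matAct U⁻¹
  map_add' x y := (Matrix.toEuclideanLin (U : Matrix (Fin m) (Fin m) ℂ)).map_add x y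
  map_smul' c x := (Matrix.toEuclideanLin (U : Matrix (Fin m) (Fin m) ℂ)).map_smul c x
  left_inv x := by
    show matAct U⁻¹ (matAct U x) = x
    rw [← matAct_mul, inv_mul_cancel, matAct_one]
  right_inv x := by
    show matAct U (matAct U⁻¹ x) = x
    rw [← matAct_mul, mul_inv_cancel, matAct_one]
  norm_map' x := by
    have h1 := inner_matAct_matAct U x x
    show ‖matAct U x‖ = ‖x‖
    rw [@norm_eq_sqrt_re_inner ℂ, @norm_eq_sqrt_re_inner ℂ _ _ _ _ x, h1]

lemma unitaryToIso_apply {m : ℕ} (U : Matrix.unitaryGroup (Fin m) ℂ)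
    (v : EuclideanSpace ℂ (Fin m)) : unitaryToIso U v = matAct U v := rfl

lemma toE_zero {n : ℕ} : toE (0 : Matrix (Fin n) (Fin n) ℂ) = 0 := rfl

set_option maxHeartbeats 1000000 in
lemma keyPair {G : Type*} [Group G] (F : Finset G) (ε : ℝ) (hε : 0 < ε)
    (h : ∀ n : ℕ, 1 ≤ n → ∀ σ : G →* Matrix.unitaryGroup (Fin n) ℂ,
      IsIrreducibleRep σ → σ ≠ 1 →
      ∀ f ∈ posTypeFns σ, ∃ x ∈ F, ε ≤ ‖f x - 1‖) {n : ℕ} (hn : 1 ≤ n)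
    (σ τ : G →* Matrix.unitaryGroup (Fin n) ℂ) (hσ : IsIrreducibleRep σ)
    (hne : ¬ RepEquiv τ σ) :
    ∃ x ∈ F, dseq ε (n*n) ≤ ‖((τ x : Matrix (Fin n) (Fin n) ℂ) *
      (σ x : Matrix (Fin n) (Fin n) ℂ)ᴴ).trace / (n:ℂ) - 1‖ := by
  have hn0 : (n:ℂ) ≠ 0 := Nat.cast_ne_zero.mpr (by omega)
  set π := tensorRep σ τ with hπdef
  have hfix : ∀ w : EuclideanSpace ℂ (Fin n × Fin n), (∀ g : G, π g w = w) → w = 0 := by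
    intro w hw
    by_contra hw0
    apply hne
    set A := fromE w with hAdef
    have hA0 : A ≠ 0 := by
      intro hA
      apply hw0
      rw [← toE_fromE w, ← hAdef, hA, toE_zero]
    have hAint : ∀ g : G, (σ g : Matrix (Fin n) (Fin n) ℂ) * A *
        (τ g : Matrix (Fin n) (Fin n) ℂ)ᴴ = A := by
      intro g
      have h1 := hw g
      rw [← toE_fromE w, ← hAdef, hπdef, tensorRep_apply] at h1
      have h2 := congrArg fromE h1
      rwa [fromE_toE, fromE_toE] at h2
    have hint : ∀ g : G, (σ g : Matrix (Fin n) (Fin n) ℂ) * A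
        = A * (τ g : Matrix (Fin n) (Fin n) ℂ) := by
      intro g
      have h2 := congrArg (fun M => M * (τ g : Matrix (Fin n) (Fin n) ℂ)) (hAint g)
      simp only [Matrix.mul_assoc] at h2
      rwa [unitary_conjT_mul, Matrix.mul_one] at h2
    set B := A * Aᴴ with hBdef
    have h3 : ∀ g : G, (τ g : Matrix (Fin n) (Fin n) ℂ) * Aᴴ
        = Aᴴ * (σ g : Matrix (Fin n) (Fin n) ℂ) := by
      intro g
      have h4 := hint g⁻¹
      rw [map_inv σ, map_inv τ, coe_inv_unitary, coe_inv_unitary] at h4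
      have h5 := congrArg Matrix.conjTranspose h4
      rw [Matrix.conjTranspose_mul, Matrix.conjTranspose_mul,
        Matrix.conjTranspose_conjTranspose, Matrix.conjTranspose_conjTranspose] at h5
      exact h5.symm
    have hBcomm : ∀ g : G, (σ g : Matrix (Fin n) (Fin n) ℂ) * B
        = B * (σ g : Matrix (Fin n) (Fin n) ℂ) := by
      intro g
      calc (σ g : Matrix (Fin n) (Fin n) ℂ) * B
          = ((σ g : Matrix (Fin n) (Fin n) ℂ) * A) * Aᴴ := by rw [hBdef, Matrix.mul_assoc]
        _ = (A * (τ g : Matrix (Fin n) (Fin n) ℂ)) * Aᴴ := by rw [hint g]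
        _ = A * ((τ g : Matrix (Fin n) (Fin n) ℂ) * Aᴴ) := by rw [Matrix.mul_assoc]
        _ = A * (Aᴴ * (σ g : Matrix (Fin n) (Fin n) ℂ)) := by rw [h3 g]
        _ = B * (σ g : Matrix (Fin n) (Fin n) ℂ) := by rw [hBdef, Matrix.mul_assoc]
    haveI : Nontrivial (EuclideanSpace ℂ (Fin n)) := by
      apply Module.nontrivial_of_finrank_pos (R := ℂ)
      rw [finrank_euclideanSpace, Fintype.card_fin]
      omega
    obtain ⟨μ, hμ⟩ := Module.End.exists_eigenvalue
      (Matrix.toEuclideanLin B : Module.End ℂ (EuclideanSpace ℂ (Fin n)))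
    set W := Module.End.eigenspace (Matrix.toEuclideanLin B) μ with hWdef
    have hWinv : ∀ g : G, ∀ w' ∈ W, matAct (σ g) w' ∈ W := by
      intro g w' hw'
      rw [hWdef, Module.End.mem_eigenspace_iff] at hw' ⊢
      show Matrix.toEuclideanLin B (matAct (σ g) w') = μ • matAct (σ g) w'
      rw [matAct, ← toEuclideanLin_mul, ← hBcomm g, toEuclideanLin_mul, hw', map_smul]
    have hWtop : W = ⊤ := by
      rcases hσ W hWinv with hbot | htop
      · exact absurd hbot hμ
      · exact htop
    have hB : B = μ • (1 : Matrix (Fin n) (Fin n) ℂ) := by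
      apply Matrix.toEuclideanLin.injective
      apply LinearMap.ext
      intro w'
      have hmem : w' ∈ W := by rw [hWtop]; exact Submodule.mem_top
      rw [hWdef, Module.End.mem_eigenspace_iff] at hmem
      rw [hmem, map_smul]
      show μ • w' = μ • (Matrix.toEuclideanLin (1 : Matrix (Fin n) (Fin n) ℂ) w')
      rw [toEuclideanLin_one]
    -- compute μ
    set r : ℝ := ∑ i, ∑ j, Complex.normSq (A i j) with hrdef
    have htrB2 : B.trace = (r : ℂ) := by
      rw [hBdef, Matrix.trace, hrdef]
      push_cast
      apply Finset.sum_congr rfl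
      intro i _
      rw [Matrix.diag_apply, Matrix.mul_apply]
      apply Finset.sum_congr rfl
      intro j _
      rw [Matrix.conjTranspose_apply]
      exact (Complex.mul_conj (A i j)).trans (by push_cast; ring)
    have htrB : B.trace = μ * n := by
      rw [hB, Matrix.trace_smul, Matrix.trace_one]
      simp
    have hr_nonneg : ∀ i ∈ (Finset.univ : Finset (Fin n)),
        0 ≤ ∑ j, Complex.normSq (A i j) := by
      intro i _
      apply Finset.sum_nonneg
      intro j _
      exact Complex.normSq_nonneg _
    have hr_pos : 0 < r := by
      rcases lt_or_eq_of_le (Finset.sum_nonneg hr_nonneg) with hlt | heq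
      · exact hlt
      · exfalso
        apply hA0
        ext i j
        have h6 := (Finset.sum_eq_zero_iff_of_nonneg hr_nonneg).mp heq.symm i
          (Finset.mem_univ i)
        have h7 := (Finset.sum_eq_zero_iff_of_nonneg (fun j _ =>
          Complex.normSq_nonneg (A i j))).mp h6 j (Finset.mem_univ j)
        simpa using Complex.normSq_eq_zero.mp h7
    have hμval : μ = (r : ℂ) / (n : ℂ) := by
      have h8 : μ * n = (r : ℂ) := by rw [← htrB, htrB2]
      rw [eq_div_iff hn0]
      exact h8
    set s : ℝ := Real.sqrt (r / n) with hsdef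
    have hrn_pos : 0 < r / n := by positivity
    have hs_pos : 0 < s := Real.sqrt_pos.mpr hrn_pos
    set M : Matrix (Fin n) (Fin n) ℂ := ((s⁻¹ : ℝ) : ℂ) • A with hMdef
    have hMunit : M ∈ Matrix.unitaryGroup (Fin n) ℂ := by
      rw [Matrix.mem_unitaryGroup_iff]
      rw [hMdef, Matrix.star_eq_conjTranspose, Matrix.conjTranspose_smul]
      rw [Matrix.smul_mul, Matrix.mul_smul]
      have h9 : (starRingEnd ℂ) ((s⁻¹ : ℝ) : ℂ) = ((s⁻¹ : ℝ) : ℂ) := Complex.conj_ofReal _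
      rw [show star (((s⁻¹ : ℝ)) : ℂ) = (((s⁻¹ : ℝ)) : ℂ) from Complex.conj_ofReal _]
      rw [smul_smul, ← hBdef, hB, smul_smul, hμval]
      have h10r : s⁻¹ * s⁻¹ * (r / n) = 1 := by
        have hss : s * s = r / n := Real.mul_self_sqrt (le_of_lt hrn_pos)
        rw [show s⁻¹ * s⁻¹ * (r / n) = (r / n) / (s * s) by ring, hss,
          div_self (ne_of_gt hrn_pos)]
      rw [show (((s⁻¹:ℝ)):ℂ) * (((s⁻¹:ℝ)):ℂ) * ((r:ℂ) / (n:ℂ))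
          = (((s⁻¹ * s⁻¹ * (r / n) : ℝ)):ℂ) by push_cast; ring]
      rw [h10r]
      simp
    have hMint : ∀ g : G, (σ g : Matrix (Fin n) (Fin n) ℂ) * M
        = M * (τ g : Matrix (Fin n) (Fin n) ℂ) := by
      intro g
      rw [hMdef, Matrix.mul_smul, Matrix.smul_mul, hint g]
    refine ⟨(unitaryToIso ⟨M, hMunit⟩), ?_⟩
    intro g v
    rw [unitaryToIso_apply, unitaryToIso_apply, ← matAct_mul, ← matAct_mul]
    have hu : (⟨M, hMunit⟩ : Matrix.unitaryGroup (Fin n) ℂ) * τ g = σ g * ⟨M, hMunit⟩ := by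
      apply Subtype.ext
      rw [Submonoid.coe_mul, Submonoid.coe_mul]
      exact (hMint g).symm
    rw [hu]
  -- apply lemC
  have hrank : Module.finrank ℂ (EuclideanSpace ℂ (Fin n × Fin n)) ≤ n * n := by
    rw [finrank_euclideanSpace, Fintype.card_prod, Fintype.card_fin]
  set c : ℂ := (((Real.sqrt n)⁻¹ : ℝ) : ℂ) with hcdef
  have hcsq : (starRingEnd ℂ) c * c = (1/n : ℂ) := by
    rw [hcdef, Complex.conj_ofReal, ← Complex.ofReal_mul]
    have hnn : (0:ℝ) < n := by positivity
    have : (Real.sqrt n)⁻¹ * (Real.sqrt n)⁻¹ = 1 / n := by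
      rw [← mul_inv]
      rw [Real.mul_self_sqrt (le_of_lt hnn)]
      exact (one_div _).symm
    rw [this]
    push_cast
    ring
  set v : EuclideanSpace ℂ (Fin n × Fin n) := toE (c • (1 : Matrix (Fin n) (Fin n) ℂ))
    with hvdef
  have hvinner : ⟪v, v⟫ = 1 := by
    rw [hvdef, inner_toE, Matrix.conjTranspose_smul, Matrix.conjTranspose_one]
    rw [Matrix.smul_mul, Matrix.mul_smul, Matrix.one_mul, smul_smul]
    rw [Matrix.trace_smul, Matrix.trace_one]
    rw [show star c = (starRingEnd ℂ) c from rfl, hcsq]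
    simp [hn0]
  have hv : ‖v‖ = 1 := by
    rw [@norm_eq_sqrt_re_inner ℂ, hvinner]
    simp
  obtain ⟨x, hxF, hxd⟩ := lemC F ε hε h (n*n) (EuclideanSpace ℂ (Fin n × Fin n)) hrank
    π hfix v hv
  refine ⟨x, hxF, ?_⟩
  have hval : ⟪π x v, v⟫ = ((τ x : Matrix (Fin n) (Fin n) ℂ) *
      (σ x : Matrix (Fin n) (Fin n) ℂ)ᴴ).trace / (n:ℂ) := by
    rw [hvdef, hπdef, tensorRep_apply, inner_toE]
    have hm1 : (σ x : Matrix (Fin n) (Fin n) ℂ) * (c • (1 : Matrix (Fin n) (Fin n) ℂ)) *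
        (τ x : Matrix (Fin n) (Fin n) ℂ)ᴴ
        = c • ((σ x : Matrix (Fin n) (Fin n) ℂ) * (τ x : Matrix (Fin n) (Fin n) ℂ)ᴴ) := by
      rw [Matrix.mul_smul, Matrix.mul_one, Matrix.smul_mul]
    rw [hm1, Matrix.conjTranspose_smul, Matrix.conjTranspose_mul,
      Matrix.conjTranspose_conjTranspose]
    rw [Matrix.smul_mul, Matrix.mul_smul, Matrix.mul_one, smul_smul, Matrix.trace_smul]
    rw [show star c = (starRingEnd ℂ) c from rfl, hcsq]
    rw [smul_eq_mul, one_div]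
    ring
  rw [hval] at hxd
  exact hxd

lemma unitary_entry_bound {n : ℕ} (S : Matrix.unitaryGroup (Fin n) ℂ) (i j : Fin n) :
    ‖(S : Matrix (Fin n) (Fin n) ℂ) i j‖ ≤ 1 := by
  have h1 : ((S : Matrix (Fin n) (Fin n) ℂ)ᴴ * S) j j = 1 := by
    rw [unitary_conjT_mul]
    exact Matrix.one_apply_eq j
  rw [Matrix.mul_apply] at h1
  have h2 : ∀ k, (S : Matrix (Fin n) (Fin n) ℂ)ᴴ j k * (S : Matrix (Fin n) (Fin n) ℂ) k j
      = (Complex.normSq ((S : Matrix (Fin n) (Fin n) ℂ) k j) : ℂ) := by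
    intro k
    rw [Matrix.conjTranspose_apply]
    rw [Complex.normSq_eq_conj_mul_self]
    rfl
  rw [Finset.sum_congr rfl (fun k _ => h2 k)] at h1
  rw [← Complex.ofReal_sum] at h1
  have h3 : (∑ k, Complex.normSq ((S : Matrix (Fin n) (Fin n) ℂ) k j)) = 1 := by
    exact_mod_cast h1
  have h4 : Complex.normSq ((S : Matrix (Fin n) (Fin n) ℂ) i j) ≤ 1 := by
    rw [← h3]
    exact Finset.single_le_sum (f := fun k => Complex.normSq ((S : Matrix (Fin n) (Fin n) ℂ) k j))
      (fun k _ => Complex.normSq_nonneg _) (Finset.mem_univ i)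
  rw [Complex.norm_def]
  rw [show (1:ℝ) = Real.sqrt 1 from (Real.sqrt_one).symm]
  exact Real.sqrt_le_sqrt h4

lemma trace_bound {n : ℕ} (hn : 1 ≤ n) (S T : Matrix.unitaryGroup (Fin n) ℂ) (D : ℝ)
    (hD : ∀ i j : Fin n, ‖(T : Matrix (Fin n) (Fin n) ℂ) i j -
      (S : Matrix (Fin n) (Fin n) ℂ) i j‖ ≤ D) :
    ‖((T : Matrix (Fin n) (Fin n) ℂ) * (S : Matrix (Fin n) (Fin n) ℂ)ᴴ).trace / (n:ℂ) - 1‖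
      ≤ n * D := by
  have hnR : (0:ℝ) < n := by positivity
  have hn0 : (n:ℂ) ≠ 0 := Nat.cast_ne_zero.mpr (by omega)
  have h1 : ((T : Matrix (Fin n) (Fin n) ℂ) * (S : Matrix (Fin n) (Fin n) ℂ)ᴴ).trace / (n:ℂ) - 1
      = (((T : Matrix (Fin n) (Fin n) ℂ) - (S : Matrix (Fin n) (Fin n) ℂ)) *
        (S : Matrix (Fin n) (Fin n) ℂ)ᴴ).trace / (n:ℂ) := by
    rw [Matrix.sub_mul, Matrix.trace_sub, unitary_mul_conjT, Matrix.trace_one]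
    rw [Fintype.card_fin]
    field_simp
  rw [h1, norm_div]
  have h2 : ‖((n:ℕ):ℂ)‖ = (n:ℝ) := by
    rw [Complex.norm_natCast]
  rw [h2]
  rw [div_le_iff₀ hnR]
  have h3 : ‖(((T : Matrix (Fin n) (Fin n) ℂ) - (S : Matrix (Fin n) (Fin n) ℂ)) *
      (S : Matrix (Fin n) (Fin n) ℂ)ᴴ).trace‖ ≤ (n:ℝ) * ((n:ℝ) * D) := by
    rw [Matrix.trace]
    calc ‖∑ i, (((T : Matrix (Fin n) (Fin n) ℂ) - (S : Matrix (Fin n) (Fin n) ℂ)) *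
        (S : Matrix (Fin n) (Fin n) ℂ)ᴴ).diag i‖
        ≤ ∑ i : Fin n, ‖(((T : Matrix (Fin n) (Fin n) ℂ) - (S : Matrix (Fin n) (Fin n) ℂ)) *
          (S : Matrix (Fin n) (Fin n) ℂ)ᴴ).diag i‖ := norm_sum_le _ _
      _ ≤ ∑ _i : Fin n, (n:ℝ) * D := by
          apply Finset.sum_le_sum
          intro i _
          rw [Matrix.diag_apply, Matrix.mul_apply]
          calc ‖∑ j, ((T : Matrix (Fin n) (Fin n) ℂ) - (S : Matrix (Fin n) (Fin n) ℂ)) i j *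
              (S : Matrix (Fin n) (Fin n) ℂ)ᴴ j i‖
              ≤ ∑ j : Fin n, ‖((T : Matrix (Fin n) (Fin n) ℂ) -
                (S : Matrix (Fin n) (Fin n) ℂ)) i j *
                (S : Matrix (Fin n) (Fin n) ℂ)ᴴ j i‖ := norm_sum_le _ _
            _ ≤ ∑ _j : Fin n, D := by
                apply Finset.sum_le_sum
                intro j _
                rw [norm_mul]
                have hb1 : ‖((T : Matrix (Fin n) (Fin n) ℂ) -
                    (S : Matrix (Fin n) (Fin n) ℂ)) i j‖ ≤ D := by
                  rw [Matrix.sub_apply]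
                  exact hD i j
                have hb2 : ‖(S : Matrix (Fin n) (Fin n) ℂ)ᴴ j i‖ ≤ 1 := by
                  rw [Matrix.conjTranspose_apply]
                  rw [show ‖star ((S : Matrix (Fin n) (Fin n) ℂ) i j)‖
                    = ‖(S : Matrix (Fin n) (Fin n) ℂ) i j‖ from norm_star _]
                  exact unitary_entry_bound S i j
                have hD0 : 0 ≤ D := le_trans (norm_nonneg _) (hD i j)
                calc ‖((T : Matrix (Fin n) (Fin n) ℂ) - (S : Matrix (Fin n) (Fin n) ℂ)) i j‖ *
                    ‖(S : Matrix (Fin n) (Fin n) ℂ)ᴴ j i‖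
                    ≤ D * 1 := mul_le_mul hb1 hb2 (norm_nonneg _) hD0
                  _ = D := mul_one D
            _ = (n:ℝ) * D := by rw [Finset.sum_const, Finset.card_univ, Fintype.card_fin,
                nsmul_eq_mul]
      _ = (n:ℝ) * ((n:ℝ) * D) := by rw [Finset.sum_const, Finset.card_univ, Fintype.card_fin,
          nsmul_eq_mul]
  calc ‖(((T : Matrix (Fin n) (Fin n) ℂ) - (S : Matrix (Fin n) (Fin n) ℂ)) *
      (S : Matrix (Fin n) (Fin n) ℂ)ᴴ).trace‖ ≤ (n:ℝ) * ((n:ℝ) * D) := h3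
    _ = (n:ℝ) * D * (n:ℝ) := by ring

set_option maxHeartbeats 1000000 in
/-- Let `G` be a (discrete) group.  If some finite `F ⊆ G` and `ε > 0`
isolate the trivial representation among the finite-dimensional irreducible unitary
representations of `G` (in the Fell topology), then for every `n ≥ 1` there are only
finitely many equivalence classes of irreducible representations `G → U(n)`. -/
theorem statement13 {G : Type*} [Group G] (F : Finset G) (ε : ℝ) (hε : 0 < ε)
    (h : ∀ n : ℕ, 1 ≤ n → ∀ σ : G →* Matrix.unitaryGroup (Fin n) ℂ,
      IsIrreducibleRep σ → σ ≠ 1 →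
      ∀ f ∈ posTypeFns σ, ∃ x ∈ F, ε ≤ ‖f x - 1‖) :
    ∀ n : ℕ, 1 ≤ n → ∃ S : Finset (G →* Matrix.unitaryGroup (Fin n) ℂ),
      ∀ σ : G →* Matrix.unitaryGroup (Fin n) ℂ, IsIrreducibleRep σ →
        ∃ τ ∈ S, RepEquiv σ τ := by
  intro n hn
  by_contra hno
  push_neg at hno
  classical
  -- hno : ∀ S, ∃ σ, IsIrreducibleRep σ ∧ ∀ τ ∈ S, ¬RepEquiv σ τ
  choose pick hpick1 hpick2 using hno
  let T : ℕ → Finset (G →* Matrix.unitaryGroup (Fin n) ℂ) :=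
    fun k => Nat.rec ∅ (fun _ S => insert (pick S) S) k
  have hT : ∀ k, T (k+1) = insert (pick (T k)) (T k) := fun _ => rfl
  set σs : ℕ → (G →* Matrix.unitaryGroup (Fin n) ℂ) := fun k => pick (T k) with hσs
  have hmono : ∀ k l : ℕ, k ≤ l → T k ⊆ T l := by
    intro k l hkl
    induction l, hkl using Nat.le_induction with
    | base => exact subset_rfl
    | succ l hkl ih =>
      refine subset_trans ih ?_
      rw [hT]
      exact Finset.subset_insert _ _
  have hmem : ∀ k l : ℕ, k < l → σs k ∈ T l := by
    intro k l hkl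
    have h1 : σs k ∈ T (k+1) := by
      rw [hT]
      exact Finset.mem_insert_self _ _
    exact hmono (k+1) l hkl h1
  have hsep0 : ∀ k l : ℕ, k < l → ¬ RepEquiv (σs l) (σs k) := by
    intro k l hkl
    exact hpick2 (T l) (σs k) (hmem k l hkl)
  have hirr : ∀ k, IsIrreducibleRep (σs k) := fun k => hpick1 (T k)
  set δ : ℝ := dseq ε (n*n) with hδ
  have hδpos : 0 < δ := dseq_pos hε _
  have hnR : (0:ℝ) < n := by positivity
  set Φ : ℕ → (↥F × Fin n × Fin n → ℂ) :=
    fun k p => (σs k (p.1 : G) : Matrix (Fin n) (Fin n) ℂ) p.2.1 p.2.2 with hΦ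
  have hsep : ∀ k l : ℕ, k < l → δ ≤ (n:ℝ) * dist (Φ k) (Φ l) := by
    intro k l hkl
    obtain ⟨x, hxF, hxd⟩ := keyPair F ε hε h hn (σs k) (σs l) (hirr k) (hsep0 k l hkl)
    have hd : ∀ i j : Fin n, ‖(σs l x : Matrix (Fin n) (Fin n) ℂ) i j -
        (σs k x : Matrix (Fin n) (Fin n) ℂ) i j‖ ≤ dist (Φ k) (Φ l) := by
      intro i j
      have h1 := dist_le_pi_dist (Φ k) (Φ l) (⟨x, hxF⟩, i, j)
      rw [dist_comm (Φ k ((⟨x, hxF⟩ : ↥F), i, j))] at h1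
      rw [dist_eq_norm] at h1
      exact h1
    have hb := trace_bound hn (σs k x) (σs l x) _ hd
    exact le_trans hxd hb
  have hbound : ∀ k, Φ k ∈ Metric.closedBall (0 : ↥F × Fin n × Fin n → ℂ) 1 := by
    intro k
    rw [Metric.mem_closedBall, dist_zero_right]
    apply pi_norm_le_iff_of_nonneg (by norm_num) |>.mpr
    intro p
    exact unitary_entry_bound (σs k (p.1 : G)) p.2.1 p.2.2
  have htb : TotallyBounded (Metric.closedBall (0 : ↥F × Fin n × Fin n → ℂ) 1) :=
    (isCompact_closedBall _ _).totallyBounded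
  rw [Metric.totallyBounded_iff] at htb
  obtain ⟨t, htfin, htcover⟩ := htb (δ/(3*n)) (by positivity)
  have hch : ∀ k : ℕ, ∃ y ∈ t, Φ k ∈ Metric.ball y (δ/(3*n)) := by
    intro k
    have h1 := htcover (hbound k)
    simpa using h1
  choose y hy1 hy2 using hch
  haveI : Finite ↥t := htfin.to_subtype
  obtain ⟨k, l, hkl, hyeq⟩ := Finite.exists_ne_map_eq_of_infinite
    (fun k : ℕ => (⟨y k, hy1 k⟩ : ↥t))
  have hyeq' : y k = y l := congrArg Subtype.val hyeq
  have hdd : dist (Φ k) (Φ l) < 2 * (δ/(3*n)) := by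
    have h1 := hy2 k
    have h2 := hy2 l
    rw [Metric.mem_ball] at h1 h2
    calc dist (Φ k) (Φ l) ≤ dist (Φ k) (y k) + dist (y l) (Φ l) := by
          rw [hyeq']
          exact dist_triangle _ _ _
      _ = dist (Φ k) (y k) + dist (Φ l) (y l) := by rw [dist_comm (y l)]
      _ < δ/(3*n) + δ/(3*n) := add_lt_add h1 h2
      _ = 2 * (δ/(3*n)) := by ring
  have hfin : δ < δ := by
    have h3 : δ ≤ (n:ℝ) * dist (Φ k) (Φ l) := by
      rcases lt_or_gt_of_ne hkl with hlt | hgt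
      · exact hsep k l hlt
      · rw [dist_comm]
        exact hsep l k hgt
    have h4 : (n:ℝ) * dist (Φ k) (Φ l) < (n:ℝ) * (2 * (δ/(3*n))) :=
      mul_lt_mul_of_pos_left hdd hnR
    have h5 : (n:ℝ) * (2 * (δ/(3*n))) = 2 * δ / 3 := by
      field_simp
    calc δ ≤ (n:ℝ) * dist (Φ k) (Φ l) := h3
      _ < 2 * δ / 3 := by rw [← h5]; exact h4
      _ < δ := by linarith
  exact lt_irrefl δ hfin
end

section
/- Let H be a compact Hausdorff topological group with normalized Haar probability measure μ, and let G be a dense subgroup of H (with the subspace topology). Then G has property (T) if and only if there exist a compact subset K ⊆ G and ε > 0 such that for every function f : H → ℂ of positive type with ∫_H f dμ = 0, one has sup_{x ∈ K} |f(x) − 1| ≥ ε. -/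
open scoped ComplexInnerProductSpace

universe uG uE

/-- A (strongly continuous) unitary representation of a topological group on a complex
Hilbert space. -/
structure UnitaryRep (G : Type uG) [Group G] [TopologicalSpace G] where
  E : Type uE
  [ngroup : NormedAddCommGroup E]
  [ips : InnerProductSpace ℂ E]
  [complete : CompleteSpace E]
  π : G →* (E ≃ₗᵢ[ℂ] E)
  cont : ∀ v : E, Continuous fun g : G => π g v

attribute [instance] UnitaryRep.ngroup UnitaryRep.ips UnitaryRep.complete

/-- Kazhdan's property (T): there are a compact set `Q ⊆ G` and `ε > 0` such that every
unitary representation of `G` possessing a `(Q,ε)`-invariant unit vector has a nonzero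
invariant vector. -/
def HasPropertyT (G : Type uG) [Group G] [TopologicalSpace G] : Prop :=
  ∃ (Q : Set G) (ε : ℝ), IsCompact Q ∧ 0 < ε ∧
    ∀ ρ : UnitaryRep.{uG, uE} G,
      (∃ v : ρ.E, ‖v‖ = 1 ∧ ∀ g ∈ Q, ‖ρ.π g v - v‖ < ε) →
      ∃ v : ρ.E, v ≠ 0 ∧ ∀ g : G, ρ.π g v = v

/-- A function of positive type: a diagonal matrix coefficient `g ↦ ⟪π(g)v, v⟫` of some
unitary representation. -/
def IsPositiveType {H : Type uG} [Group H] [TopologicalSpace H] (f : H → ℂ) : Prop :=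
  ∃ (ρ : UnitaryRep.{uG, uE} H) (v : ρ.E), ∀ g : H, f g = ⟪ρ.π g v, v⟫

open MeasureTheory

set_option linter.unusedSectionVars false

namespace ForST16

variable {X : Type uG} [Group X] [TopologicalSpace X]

section Helpers

variable {E : Type uE} [NormedAddCommGroup E] [InnerProductSpace ℂ E]

theorem repApply (π : X →* (E ≃ₗᵢ[ℂ] E)) (x y : X) (v : E) :
    π x (π y v) = π (x * y) v := by rw [map_mul]; rfl

theorem repOne (π : X →* (E ≃ₗᵢ[ℂ] E)) (v : E) : π 1 v = v := by rw [map_one]; rfl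

theorem repInv (π : X →* (E ≃ₗᵢ[ℂ] E)) (x : X) (v : E) : π x⁻¹ (π x v) = v := by
  rw [repApply, inv_mul_cancel, repOne]

theorem repAdjoint (π : X →* (E ≃ₗᵢ[ℂ] E)) (x : X) (u v : E) :
    ⟪u, π x v⟫ = ⟪π x⁻¹ u, v⟫ := by
  conv_lhs => rw [← repInv π x⁻¹ u]
  rw [inv_inv, LinearIsometryEquiv.inner_map_map]

end Helpers

/-- The submodule of invariant vectors of a unitary representation. -/
def invariants (ρ : UnitaryRep.{uG, uE} X) : Submodule ℂ ρ.E where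
  carrier := {v | ∀ x : X, ρ.π x v = v}
  add_mem' ha hb := fun x => by rw [map_add, ha x, hb x]
  zero_mem' := fun x => by simp
  smul_mem' c v hv := fun x => by rw [_root_.map_smul, hv x]

theorem mem_invariants {ρ : UnitaryRep.{uG, uE} X} {v : ρ.E} :
    v ∈ invariants ρ ↔ ∀ x : X, ρ.π x v = v := Iff.rfl

theorem orthogonal_invariants_invariant (ρ : UnitaryRep.{uG, uE} X) (x : X)
    {w : ρ.E} (hw : w ∈ (invariants ρ)ᗮ) : ρ.π x w ∈ (invariants ρ)ᗮ := by
  rw [Submodule.mem_orthogonal] at hw ⊢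
  intro u hu
  rw [repAdjoint, mem_invariants.1 hu x⁻¹]
  exact hw u hu

section Subrep

variable (ρ : UnitaryRep.{uG, uE} X) (S : Submodule ℂ ρ.E)
  (hinv : ∀ x : X, ∀ v ∈ S, ρ.π x v ∈ S)

/-- The action of `ρ` on an invariant submodule. -/
noncomputable def subAct (x : X) : S ≃ₗᵢ[ℂ] S :=
  { toLinearEquiv :=
    { toFun := fun w => ⟨ρ.π x w, hinv x w w.2⟩
      invFun := fun w => ⟨ρ.π x⁻¹ w, hinv x⁻¹ w w.2⟩
      map_add' := fun a b => Subtype.ext ((ρ.π x).map_add a b)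
      map_smul' := fun c a => Subtype.ext ((ρ.π x).map_smul c a)
      left_inv := fun a => Subtype.ext (repInv ρ.π x a)
      right_inv := fun a => Subtype.ext (by
        have := repInv ρ.π x⁻¹ (a : ρ.E); rwa [inv_inv] at this) }
    norm_map' := fun a => (ρ.π x).norm_map (a : ρ.E) }

theorem subAct_coe (x : X) (w : S) : (subAct ρ S hinv x w : ρ.E) = ρ.π x w := rfl

/-- Restriction of a unitary representation to an invariant closed submodule. -/
@[reducible] noncomputable def subrep (hcl : IsClosed (S : Set ρ.E)) : UnitaryRep.{uG, uE} X :=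
  letI : CompleteSpace S := hcl.completeSpace_coe
  { E := S
    π := MonoidHom.mk' (fun x => subAct ρ S hinv x)
      (fun x y => LinearIsometryEquiv.ext fun w =>
        Subtype.ext (repApply ρ.π x y (w : ρ.E)).symm)
    cont := fun v => by
      apply Continuous.subtype_mk
      exact ρ.cont (v : ρ.E) }

theorem subrep_coe (hcl : IsClosed (S : Set ρ.E)) (x : X) (w : S) :
    ((((subrep ρ S hinv hcl).π x) w : S) : ρ.E) = ρ.π x (w : ρ.E) := rfl

end Subrep

end ForST16
section Part2

open scoped ComplexInnerProductSpace
open TopologicalSpace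

namespace ForST16

universe uH uF
variable {X : Type uG} [Group X] [TopologicalSpace X]

/-- Restriction of a unitary representation to a subgroup. -/
@[reducible] noncomputable def resSubgroup {H : Type uH} [Group H] [TopologicalSpace H]
    (ρ : UnitaryRep.{uH, uE} H) (G : Subgroup H) : UnitaryRep.{uH, uE} ↥G where
  E := ρ.E
  π := ρ.π.comp G.subtype
  cont := fun v => (ρ.cont v).comp continuous_subtype_val

/-- A separable metric space is small in every universe. -/
theorem small_of_separable (F : Type uF) [MetricSpace F] [SeparableSpace F] :
    Small.{uE} F := by
  obtain ⟨D, hDc, hDd⟩ := TopologicalSpace.exists_countable_dense F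
  haveI : Countable D := hDc.to_subtype
  have hinj : Function.Injective (fun x : F => fun d : D => dist x (d : F)) := by
    intro x y hxy
    have h : ∀ d : D, dist x (d : F) = dist y (d : F) := fun d => congrFun hxy d
    have : dist x y ≤ 0 := by
      refine le_of_forall_pos_le_add ?_
      intro ε hε
      obtain ⟨d, hdx, hd⟩ := Metric.dense_iff.1 hDd x (ε / 2) (by positivity)
      have h2 : dist x (d : F) < ε / 2 := by
        rw [dist_comm]; exact Metric.mem_ball.1 hdx
      calc dist x y ≤ dist x d + dist y d := dist_triangle_right x y d
        _ = dist x d + dist x d := by rw [← h ⟨d, hd⟩]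
        _ ≤ ε / 2 + ε / 2 := by
            have := h2.le
            exact add_le_add this this
        _ = 0 + ε := by ring
    exact eq_of_dist_eq_zero (le_antisymm this dist_nonneg)
  exact small_of_injective hinj

/-- Transport of a unitary representation to an arbitrary universe, assuming
the underlying space is separable. -/
theorem exists_smallRep (ρ : UnitaryRep.{uG, uF} X) [SeparableSpace ρ.E] :
    ∃ (σ : UnitaryRep.{uG, uE} X) (e : σ.E ≃ₗᵢ[ℂ] ρ.E),
      ∀ (x : X) (v : σ.E), e (σ.π x v) = ρ.π x (e v) := by
  haveI : Small.{uE} ρ.E := small_of_separable ρ.E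
  obtain ⟨F', ⟨e0⟩⟩ : ∃ F' : Type uE, Nonempty (F' ≃ ρ.E) :=
    ⟨Shrink.{uE} ρ.E, ⟨(equivShrink ρ.E).symm⟩⟩
  letI : AddCommGroup F' := e0.addCommGroup
  letI : Module ℂ F' := e0.module ℂ
  let l : F' ≃ₗ[ℂ] ρ.E := e0.linearEquiv ℂ
  letI core : InnerProductSpace.Core ℂ F' :=
    { inner := fun x y => ⟪l x, l y⟫
      conj_inner_symm := fun x y => inner_conj_symm (l x) (l y)
      re_inner_nonneg := fun x => inner_self_nonneg
      definite := fun x hx => by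
        have : l x = 0 := inner_self_eq_zero.1 hx
        exact l.map_eq_zero_iff.1 this
      add_left := fun x y z => by simp [_root_.map_add, inner_add_left]
      smul_left := fun x y c => by simp [_root_.map_smul, inner_smul_left]; ring }
  letI nacg : NormedAddCommGroup F' := core.toNormedAddCommGroup
  letI ips : InnerProductSpace ℂ F' := InnerProductSpace.ofCore core.toCore
  have hnorm : ∀ x : F', ‖l x‖ = ‖x‖ := by
    intro x
    rw [@norm_eq_sqrt_re_inner ℂ, @norm_eq_sqrt_re_inner ℂ F']
    rfl
  let li : F' ≃ₗᵢ[ℂ] ρ.E := ⟨l, hnorm⟩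
  letI : CompleteSpace F' := li.toIsometryEquiv.completeSpace
  refine ⟨{ E := F'
            π := MonoidHom.mk' (fun x => (li.trans (ρ.π x)).trans li.symm) ?_
            cont := ?_ }, li, ?_⟩
  · intro x y
    apply LinearIsometryEquiv.ext
    intro w
    show li.symm (ρ.π (x * y) (li w)) = li.symm (ρ.π x (li (li.symm (ρ.π y (li w)))))
    rw [li.apply_symm_apply, repApply]
  · intro v
    show Continuous fun x : X => li.symm (ρ.π x (li v))
    exact li.symm.continuous.comp (ρ.cont (li v))
  · intro x v
    show li ((li.trans (ρ.π x)).trans li.symm v) = ρ.π x (li v)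
    simp

end ForST16
end Part2

section Part3
open scoped ComplexInnerProductSpace
open MeasureTheory
namespace ForST16

universe uH uF

variable {H : Type uH} [Group H] [TopologicalSpace H] [IsTopologicalGroup H] [T2Space H]
  [CompactSpace H] [MeasurableSpace H] [BorelSpace H]
  (μ : Measure H) [μ.IsHaarMeasure] [IsProbabilityMeasure μ]
  (ρ : UnitaryRep.{uH, uF} H) (v : ρ.E)

theorem integrable_orbit : Integrable (fun x => ρ.π x v) μ :=
  (ρ.cont v).integrable_of_hasCompactSupport ((isClosed_tsupport _).isCompact)

/-- The Haar average of the orbit of `v`. -/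
noncomputable def avgVec : ρ.E := ∫ x, ρ.π x v ∂μ

theorem avg_invariant (h : H) : ρ.π h (avgVec μ ρ v) = avgVec μ ρ v := by
  unfold avgVec
  have key := ContinuousLinearMap.integral_comp_comm ((ρ.π h).toLinearIsometry.toContinuousLinearMap)
    (integrable_orbit μ ρ v)
  have key2 : (ρ.π h) (∫ (x : H), (ρ.π x) v ∂μ)
      = ∫ (x : H), (ρ.π h).toLinearIsometry.toContinuousLinearMap ((ρ.π x) v) ∂μ := key.symm
  rw [key2]
  have h1 : ∀ x : H, (ρ.π h).toLinearIsometry.toContinuousLinearMap (ρ.π x v) = ρ.π (h * x) v :=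
    fun x => repApply ρ.π h x v
  simp_rw [h1]
  exact integral_mul_left_eq_self (fun x => ρ.π x v) h

theorem inner_avg (u : ρ.E) (hu : ∀ x : H, ρ.π x u = u) :
    ⟪u, avgVec μ ρ v⟫ = ⟪u, v⟫ := by
  unfold avgVec
  rw [← integral_inner (integrable_orbit μ ρ v) u]
  have h1 : ∀ x : H, ⟪u, ρ.π x v⟫ = ⟪u, v⟫ := fun x => by rw [repAdjoint, hu x⁻¹]
  simp_rw [h1]
  simp

theorem integral_coeff : ∫ x, ⟪ρ.π x v, v⟫ ∂μ = ⟪avgVec μ ρ v, v⟫ := by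
  have h1 : (fun x : H => ⟪ρ.π x v, v⟫) = fun x => starRingEnd ℂ ⟪v, ρ.π x v⟫ := by
    funext x; rw [inner_conj_symm]
  rw [h1, integral_conj, integral_inner (integrable_orbit μ ρ v) v]
  rw [inner_conj_symm]
  rfl

theorem avg_eq_zero_of_integral_zero (hz : ∫ x, ⟪ρ.π x v, v⟫ ∂μ = 0) :
    avgVec μ ρ v = 0 := by
  have h := inner_avg μ ρ v (avgVec μ ρ v) (fun x => avg_invariant μ ρ v x)
  rw [integral_coeff] at hz
  have h2 : ⟪avgVec μ ρ v, v⟫ = 0 := hz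
  rw [h2] at h
  exact inner_self_eq_zero.1 h

theorem orth_invariants_of_integral_zero (hz : ∫ x, ⟪ρ.π x v, v⟫ ∂μ = 0)
    (u : ρ.E) (hu : ∀ x : H, ρ.π x u = u) : ⟪u, v⟫ = 0 := by
  rw [← inner_avg μ ρ v u hu, avg_eq_zero_of_integral_zero μ ρ v hz, inner_zero_right]

end ForST16
end Part3

section Part4
open scoped ComplexInnerProductSpace Uniformity Topology
open Filter Set
namespace ForST16

universe uH uF

variable {H : Type uH} [Group H] [TopologicalSpace H] [IsTopologicalGroup H] [T2Space H]
  [CompactSpace H]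

/-- A strongly continuous unitary representation of a dense subgroup of a compact
Hausdorff group extends to the whole group. -/
theorem exists_extension (G : Subgroup H) (hG : Dense (G : Set H))
    (ρ : UnitaryRep.{uH, uF} ↥G) :
    ∃ Pi : H →* (ρ.E ≃ₗᵢ[ℂ] ρ.E),
      (∀ v : ρ.E, Continuous fun x : H => Pi x v) ∧
      (∀ (g : ↥G) (v : ρ.E), Pi (g : H) v = ρ.π g v) := by
  letI U : UniformSpace H := uniformSpaceOfCompactR1
  have hdr : DenseRange (Subtype.val : ↥G → H) := by
    rw [DenseRange, Subtype.range_coe]; exact hG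
  have hui : IsUniformInducing (Subtype.val : ↥G → H) :=
    isUniformEmbedding_subtype_val.isUniformInducing
  -- uniform continuity of orbit maps
  have huc : ∀ v : ρ.E, UniformContinuous fun g : ↥G => ρ.π g v := by
    intro v
    intro V hV
    obtain ⟨ε, hε, hball⟩ := Metric.mem_uniformity_dist.1 hV
    have hcv : Continuous fun g : ↥G => ρ.π g v := ρ.cont v
    have htend : Tendsto (fun g : ↥G => ρ.π g v) (𝓝 1) (𝓝 v) := by
      have h := hcv.continuousAt (x := (1 : ↥G))
      rwa [ContinuousAt, repOne] at h
    have h1 : {g : ↥G | dist (ρ.π g v) v < ε} ∈ 𝓝 (1 : ↥G) := by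
      have := htend (Metric.ball_mem_nhds v hε)
      exact this
    rw [show (1 : ↥G) = ⟨(1 : H), G.one_mem⟩ from rfl, nhds_subtype_eq_comap] at h1
    obtain ⟨V₁, hV₁, hV₁sub⟩ := mem_comap.1 h1
    rw [← hui.comap_uniformity]
    apply mem_comap.2
    refine ⟨(fun p : H × H => p.1⁻¹ * p.2) ⁻¹' V₁, ?_, ?_⟩
    · rw [compactSpace_uniformity, Filter.mem_iSup]
      intro x
      have hc : ContinuousAt (fun p : H × H => p.1⁻¹ * p.2) (x, x) :=
        (Continuous.mul (continuous_fst.inv) continuous_snd).continuousAt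
      have hx1 : (fun p : H × H => p.1⁻¹ * p.2) (x, x) = 1 := inv_mul_cancel x
      apply hc.preimage_mem_nhds
      show V₁ ∈ 𝓝 ((x, x).1⁻¹ * (x, x).2)
      simpa using hV₁
    · rintro ⟨g, h⟩ hgh
      simp only [mem_preimage] at hgh ⊢
      apply hball
      have hk : ((g⁻¹ * h : ↥G) : H) = (↑g)⁻¹ * ↑h := rfl
      have h2 : dist (ρ.π (g⁻¹ * h) v) v < ε := by
        apply hV₁sub
        show ((g⁻¹ * h : ↥G) : H) ∈ V₁
        rw [hk]; exact hgh
      have h3 : ρ.π h v = ρ.π g (ρ.π (g⁻¹ * h) v) := by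
        rw [repApply, mul_inv_cancel_left]
      calc dist (ρ.π g v) (ρ.π h v)
          = dist (ρ.π g v) (ρ.π g (ρ.π (g⁻¹ * h) v)) := by rw [← h3]
        _ = dist v (ρ.π (g⁻¹ * h) v) := (ρ.π g).isometry.dist_eq _ _
        _ < ε := by rwa [dist_comm]
  -- the extension of each orbit map
  let T : H → ρ.E → ρ.E :=
    fun x v => (hui.isDenseInducing hdr).extend (fun g : ↥G => ρ.π g v) x
  have hTg : ∀ (v : ρ.E) (g : ↥G), T (g : H) v = ρ.π g v :=
    fun v g => uniformly_extend_of_ind hui hdr (huc v) g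
  have hTc : ∀ v : ρ.E, Continuous fun x => T x v :=
    fun v => (uniformContinuous_uniformly_extend hui hdr (huc v)).continuous
  -- a density principle
  have ext_on : ∀ {f₁ f₂ : H → ρ.E}, Continuous f₁ → Continuous f₂ →
      (∀ g : ↥G, f₁ (g : H) = f₂ (g : H)) → f₁ = f₂ := by
    intro f₁ f₂ h₁ h₂ hOn
    refine Continuous.ext_on hdr h₁ h₂ ?_
    rintro _ ⟨g, rfl⟩
    exact hOn g
  have hadd : ∀ x v w, T x (v + w) = T x v + T x w := by
    intro x v w
    have := ext_on (f₂ := fun x => T x v + T x w) (hTc (v + w)) ((hTc v).add (hTc w))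
      (fun g => by rw [hTg, hTg, hTg, map_add])
    exact congrFun this x
  have hsmul : ∀ (x) (c : ℂ) (v), T x (c • v) = c • T x v := by
    intro x c v
    have := ext_on (f₂ := fun x => c • T x v) (hTc (c • v)) ((hTc v).const_smul c)
      (fun g => by rw [hTg, hTg, _root_.map_smul])
    exact congrFun this x
  have hinner : ∀ x v w, ⟪T x v, T x w⟫ = ⟪v, w⟫ := by
    intro x v w
    have := Continuous.ext_on hdr ((hTc v).inner (hTc w)) continuous_const
      (f := fun x => (⟪T x v, T x w⟫ : ℂ)) (g := fun _ => (⟪v, w⟫ : ℂ)) ?_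
    · exact congrFun this x
    · rintro _ ⟨g, rfl⟩
      show (⟪T (g : H) v, T (g : H) w⟫ : ℂ) = ⟪v, w⟫
      rw [hTg, hTg, LinearIsometryEquiv.inner_map_map]
  have hnorm : ∀ x v, ‖T x v‖ = ‖v‖ := by
    intro x v
    rw [@norm_eq_sqrt_re_inner ℂ, @norm_eq_sqrt_re_inner ℂ _ _ _ (x := v), hinner]
  have hsub : ∀ x v w, T x (v - w) = T x v - T x w := by
    intro x v w
    have h := hadd x v ((-1 : ℂ) • w)
    rw [hsmul, neg_one_smul, neg_one_smul, ← sub_eq_add_neg, ← sub_eq_add_neg] at h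
    exact h
  have hTcont2 : ∀ x, Continuous (T x) := by
    intro x
    have : Isometry (T x) := Isometry.of_dist_eq (fun v w => by
      rw [dist_eq_norm, dist_eq_norm, ← hsub, hnorm])
    exact this.continuous
  have hmulg : ∀ (g : ↥G) (v : ρ.E) (x : H), T (x * (g : H)) v = T x (ρ.π g v) := by
    intro g v
    have := ext_on ((hTc v).comp (continuous_mul_right (g : H))) (hTc (ρ.π g v))
      (fun h => by
        show T ((h : H) * (g : H)) v = T (h : H) (ρ.π g v)
        rw [show ((h : H) * (g : H)) = ((h * g : ↥G) : H) from rfl, hTg, hTg, ← repApply])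
    exact fun x => congrFun this x
  have hmul : ∀ x y v, T (x * y) v = T x (T y v) := by
    intro x y v
    have := ext_on (f₁ := fun y => T (x * y) v) (f₂ := fun y => T x (T y v))
      ((hTc v).comp (continuous_mul_left x)) ((hTcont2 x).comp (hTc v))
      (fun g => by
        show T (x * (g : H)) v = T x (T (g : H) v)
        rw [hmulg, hTg])
    exact congrFun this y
  have hone : ∀ v, T 1 v = v := by
    intro v
    have h := hTg v 1
    rw [show ((1 : ↥G) : H) = (1 : H) from rfl, repOne] at h
    exact h
  have hinvT : ∀ x v, T x⁻¹ (T x v) = v := fun x v => by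
    rw [← hmul, inv_mul_cancel, hone]
  have hinvT' : ∀ x v, T x (T x⁻¹ v) = v := fun x v => by
    rw [← hmul, mul_inv_cancel, hone]
  refine ⟨MonoidHom.mk' (fun x =>
    { toLinearEquiv :=
      { toFun := T x
        invFun := T x⁻¹
        map_add' := hadd x
        map_smul' := fun c v => hsmul x c v
        left_inv := fun v => hinvT x v
        right_inv := fun v => hinvT' x v }
      norm_map' := hnorm x })
    (fun x y => LinearIsometryEquiv.ext fun v => hmul x y v), ?_, ?_⟩
  · exact hTc
  · exact fun g v => hTg v g

end ForST16
end Part4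

section Part5
open scoped ComplexInnerProductSpace
open Set TopologicalSpace
namespace ForST16

universe uH uF

variable {H : Type uH} [Group H] [TopologicalSpace H]

/-- The closed linear span of the orbit of a vector. -/
noncomputable def orbitSpan (ρ : UnitaryRep.{uH, uF} H) (v : ρ.E) : Submodule ℂ ρ.E :=
  (Submodule.span ℂ (Set.range fun x : H => ρ.π x v)).topologicalClosure

theorem mem_orbitSpan_self (ρ : UnitaryRep.{uH, uF} H) (v : ρ.E) : v ∈ orbitSpan ρ v :=
  Submodule.le_topologicalClosure _ (Submodule.subset_span ⟨1, repOne ρ.π v⟩)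

theorem isClosed_orbitSpan (ρ : UnitaryRep.{uH, uF} H) (v : ρ.E) :
    IsClosed ((orbitSpan ρ v : Submodule ℂ ρ.E) : Set ρ.E) :=
  Submodule.isClosed_topologicalClosure _

theorem orbitSpan_invariant (ρ : UnitaryRep.{uH, uF} H) (v : ρ.E) :
    ∀ x : H, ∀ w ∈ orbitSpan ρ v, ρ.π x w ∈ orbitSpan ρ v := by
  intro x w hw
  set A := Submodule.span ℂ (Set.range fun y : H => ρ.π y v) with hA
  have h1 : ∀ u ∈ A, ρ.π x u ∈ A := by
    intro u hu
    have hle : A ≤ Submodule.comap (ρ.π x).toLinearEquiv.toLinearMap A := by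
      rw [Submodule.span_le]
      rintro _ ⟨y, rfl⟩
      show ρ.π x (ρ.π y v) ∈ A
      rw [repApply]
      exact Submodule.subset_span ⟨x * y, rfl⟩
    exact hle hu
  -- pass to the closure
  have hw' : w ∈ closure (A : Set ρ.E) := by
    rw [← Submodule.topologicalClosure_coe]; exact hw
  have h2 : ρ.π x w ∈ closure ((fun u => ρ.π x u) '' (A : Set ρ.E)) :=
    image_closure_subset_closure_image (ρ.π x).continuous ⟨w, hw', rfl⟩
  have h3 : ((fun u => ρ.π x u) '' (A : Set ρ.E)) ⊆ (A : Set ρ.E) := by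
    rintro _ ⟨u, hu, rfl⟩; exact h1 u hu
  have h4 : ρ.π x w ∈ closure (A : Set ρ.E) := closure_mono h3 h2
  show ρ.π x w ∈ orbitSpan ρ v
  rw [← SetLike.mem_coe, orbitSpan, Submodule.topologicalClosure_coe]
  exact h4

theorem separable_orbitSpan [CompactSpace H] (ρ : UnitaryRep.{uH, uF} H) (v : ρ.E) :
    SeparableSpace ↥(orbitSpan ρ v) := by
  have h1 : IsCompact (Set.range fun x : H => ρ.π x v) := isCompact_range (ρ.cont v)
  have h2 : IsSeparable ((Submodule.span ℂ (Set.range fun x : H => ρ.π x v) :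
      Submodule ℂ ρ.E) : Set ρ.E) := h1.isSeparable.span
  have h3 : IsSeparable ((orbitSpan ρ v : Submodule ℂ ρ.E) : Set ρ.E) := by
    rw [orbitSpan, Submodule.topologicalClosure_coe]
    exact h2.closure
  exact h3.separableSpace

end ForST16
end Part5

section Main
open scoped ComplexInnerProductSpace
open MeasureTheory Set TopologicalSpace ForST16


set_option maxHeartbeats 2000000 in
/-- A dense subgroup `G` of a compact Hausdorff group `H` (with normalized
Haar measure `μ`) has property (T) iff there are a compact `K ⊆ G` and `ε > 0` such
that every function of positive type on `H` with zero Haar integral is at distance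
`≥ ε` from `1` somewhere on `K`. -/
theorem statement16 {H : Type*} [TopologicalSpace H] [Group H] [IsTopologicalGroup H]
    [T2Space H] [CompactSpace H] [MeasurableSpace H] [BorelSpace H]
    (μ : Measure H) [μ.IsHaarMeasure] [IsProbabilityMeasure μ]
    (G : Subgroup H) (hG : Dense (G : Set H)) :
    HasPropertyT ↥G ↔
      ∃ (K : Set H) (ε : ℝ), K ⊆ (G : Set H) ∧ IsCompact K ∧ 0 < ε ∧
        ∀ f : H → ℂ, IsPositiveType f → (∫ x, f x ∂μ) = 0 →
          ∃ x ∈ K, ε ≤ ‖f x - 1‖ := by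
  constructor
  · rintro ⟨Q, ε₀, hQc, hε₀, hT⟩
    refine ⟨(Subtype.val '' Q) ∪ {1}, min (ε₀^2/9) (1/2), ?_, ?_, ?_, ?_⟩
    · rintro x (⟨g, hg, rfl⟩ | hx)
      · exact g.2
      · rw [mem_singleton_iff] at hx; rw [hx]; exact G.one_mem
    · exact (hQc.image continuous_subtype_val).union isCompact_singleton
    · apply lt_min
      · positivity
      · norm_num
    · intro f hf hfint
      by_contra hcon
      push_neg at hcon
      set ε := min (ε₀^2/9) (1/2) with hεdef
      have hεpos : 0 < ε := by
        apply lt_min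
        · positivity
        · norm_num
      have hε9 : ε ≤ ε₀^2/9 := min_le_left _ _
      have hε12 : ε ≤ 1/2 := min_le_right _ _
      obtain ⟨ρ, v, hfv⟩ := hf
      have hint0 : ∫ x, (⟪ρ.π x v, v⟫ : ℂ) ∂μ = 0 := by
        simp only [hfv] at hfint; exact hfint
      have horth : ∀ u : ρ.E, (∀ x : H, ρ.π x u = u) → (⟪u, v⟫ : ℂ) = 0 :=
        fun u hu => orth_invariants_of_integral_zero μ ρ v hint0 u hu
      have hf1 : ‖f 1 - 1‖ < ε := hcon 1 (Or.inr rfl)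
      have hfv1 : f 1 = ((‖v‖^2 : ℝ) : ℂ) := by
        rw [hfv, repOne, inner_self_eq_norm_sq_to_K]; norm_cast
      have hv2 : |‖v‖^2 - 1| < ε := by
        have h : f 1 - 1 = ((‖v‖^2 - 1 : ℝ) : ℂ) := by rw [hfv1]; push_cast; ring
        rw [h, Complex.norm_real, Real.norm_eq_abs] at hf1
        exact hf1
      have hva : 1 - ε < ‖v‖^2 := by linarith [(abs_lt.1 hv2).1]
      have hvb : ‖v‖^2 < 1 + ε := by linarith [(abs_lt.1 hv2).2]
      have hvpos : 0 < ‖v‖ := by nlinarith [norm_nonneg v]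
      -- subspace setup
      set σ := subrep ρ (orbitSpan ρ v) (orbitSpan_invariant ρ v) (isClosed_orbitSpan ρ v)
        with hσ
      set vS : σ.E := (⟨v, mem_orbitSpan_self ρ v⟩ : ↥(orbitSpan ρ v)) with hvS
      set Wsub := (invariants σ)ᗮ with hW
      have hWinv : ∀ x : H, ∀ w ∈ Wsub, σ.π x w ∈ Wsub :=
        fun x w hw => orthogonal_invariants_invariant σ x hw
      have hWcl : IsClosed ((Wsub : Submodule ℂ σ.E) : Set σ.E) :=
        Submodule.isClosed_orthogonal _
      set τ := subrep σ Wsub hWinv hWcl with hτ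
      have hvW : vS ∈ Wsub := by
        rw [hW, Submodule.mem_orthogonal]
        intro u hu
        have hu' : ∀ x : H, ρ.π x (u : ρ.E) = (u : ρ.E) := by
          intro x
          have h := congrArg (Subtype.val) (mem_invariants.1 hu x)
          rwa [subrep_coe] at h
        have h0 : (⟪(u : ρ.E), v⟫ : ℂ) = 0 := horth _ hu'
        rw [Submodule.coe_inner]; exact h0
      set vτ : τ.E := (⟨vS, hvW⟩ : ↥Wsub) with hvτ
      haveI hsepS : SeparableSpace σ.E := separable_orbitSpan ρ v
      haveI : SecondCountableTopology σ.E := UniformSpace.secondCountable_of_separable _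
      haveI : SeparableSpace τ.E := by
        show SeparableSpace ↥Wsub
        infer_instance
      obtain ⟨τ', e, he⟩ := exists_smallRep τ
      set c : ℂ := ((‖v‖⁻¹ : ℝ) : ℂ) with hc
      have hcnorm : ‖c‖ = ‖v‖⁻¹ := by
        rw [hc, Complex.norm_real, Real.norm_eq_abs,
          abs_of_nonneg (inv_nonneg.2 (norm_nonneg v))]
      set u : τ'.E := e.symm (c • vτ) with hu
      have hvτnorm : ‖vτ‖ = ‖v‖ := rfl
      have hu1 : ‖u‖ = 1 := by
        rw [hu, e.symm.norm_map, norm_smul, hcnorm, hvτnorm,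
          inv_mul_cancel₀ (ne_of_gt hvpos)]
      have halm : ∀ g ∈ Q, ‖(resSubgroup τ' G).π g u - u‖ < ε₀ := by
        intro g hgQ
        have hgK : ((g : ↥G) : H) ∈ (Subtype.val '' Q) ∪ {1} := Or.inl ⟨g, hgQ, rfl⟩
        have hfg : ‖f ↑g - 1‖ < ε := hcon _ hgK
        have hre : 1 - ε < (f ↑g).re := by
          have h1 : |(f ↑g - 1).re| ≤ ‖f ↑g - 1‖ := by
            exact Complex.abs_re_le_norm _
          have h2 : (f ↑g - 1).re = (f ↑g).re - 1 := by simp [Complex.sub_re]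
          rw [h2] at h1
          linarith [(abs_lt.1 (lt_of_le_of_lt h1 hfg)).1]
        have hkey : ‖ρ.π ↑g v - v‖^2 = 2*‖v‖^2 - 2*(f ↑g).re := by
          have hn := @norm_sub_sq ℂ _ _ _ _ (ρ.π ↑g v) v
          rw [(ρ.π ↑g).norm_map] at hn
          have hre2 : RCLike.re (⟪ρ.π ↑g v, v⟫ : ℂ) = (f ↑g).re := by rw [hfv]; rfl
          rw [hre2] at hn; linarith
        have hvalτ : ‖τ.π ↑g vτ - vτ‖ = ‖ρ.π ↑g v - v‖ := rfl
        have hres : (resSubgroup τ' G).π g u = τ'.π ↑g u := rfl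
        have hnormeq : ‖(resSubgroup τ' G).π g u - u‖ = ‖c‖ * ‖τ.π ↑g vτ - vτ‖ := by
          rw [hres]
          have h1 : ‖τ'.π ↑g u - u‖ = ‖e (τ'.π ↑g u - u)‖ := (e.norm_map _).symm
          rw [h1, map_sub, he, hu, e.apply_symm_apply, _root_.map_smul, ← smul_sub, norm_smul]
        rw [hnormeq, hvalτ, hcnorm]
        have h9 : 9*ε ≤ ε₀^2 := by linarith
        have hv2pos : 0 < ‖v‖^2 := by positivity
        have hmain : ‖ρ.π ↑g v - v‖^2 < ε₀^2 * ‖v‖^2 := by nlinarith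
        have hfinal : (‖v‖⁻¹ * ‖ρ.π ↑g v - v‖)^2 < ε₀^2 := by
          rw [mul_pow, inv_pow]
          calc (‖v‖^2)⁻¹ * ‖ρ.π ↑g v - v‖^2
              < (‖v‖^2)⁻¹ * (ε₀^2 * ‖v‖^2) := by
                exact mul_lt_mul_of_pos_left hmain (by positivity)
            _ = ε₀^2 := by field_simp
        have := lt_of_pow_lt_pow_left₀ 2 hε₀.le hfinal
        exact this
      obtain ⟨z, hz0, hzinv⟩ := hT (resSubgroup τ' G) ⟨u, hu1, halm⟩
      set y := e z with hy
      have hyG : ∀ g : ↥G, τ.π (g : H) y = y := by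
        intro g
        have h2 : τ'.π ↑g z = z := hzinv g
        rw [hy, ← he, h2]
      have hyH : ∀ x : H, τ.π x y = y := by
        have hfun := Continuous.ext_on hG (τ.cont y) continuous_const
          (f := fun x : H => τ.π x y) (g := fun _ => y) ?_
        · exact fun x => congrFun hfun x
        · intro x hx
          exact hyG ⟨x, hx⟩
      have hyI : (y : σ.E) ∈ invariants σ := by
        rw [mem_invariants]
        intro x
        have h := congrArg Subtype.val (hyH x)
        rwa [subrep_coe] at h
      have hy0 : (y : σ.E) = 0 := by
        have hyW : (y : σ.E) ∈ Wsub := y.2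
        have h2 : ∀ u ∈ invariants σ, (⟪u, (y : σ.E)⟫ : ℂ) = 0 :=
          (Submodule.mem_orthogonal (invariants σ) _).1 hyW
        exact inner_self_eq_zero.1 (h2 _ hyI)
      apply hz0
      have hyzero : y = 0 := Subtype.ext hy0
      rw [hy] at hyzero
      exact e.map_eq_zero_iff.1 hyzero
  · rintro ⟨K, ε, hKG, hKc, hε, hcrit⟩
    refine ⟨Subtype.val ⁻¹' K, ε, ?_, hε, ?_⟩
    · exact Topology.IsInducing.subtypeVal.isCompact_preimage' hKc
        (by rw [Subtype.range_coe]; exact hKG)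
    · rintro ρ ⟨v, hv1, hvQ⟩
      obtain ⟨Pi, hPic, hPig⟩ := exists_extension G hG ρ
      let ρH : UnitaryRep H := ⟨ρ.E, Pi, hPic⟩
      by_cases hw : avgVec μ ρH v = 0
      · -- no invariant part: contradiction with the criterion
        exfalso
        set f : H → ℂ := fun x => ⟪ρH.π x v, v⟫ with hfdef
        have hfint : ∫ x, f x ∂μ = 0 := by
          rw [hfdef]
          rw [integral_coeff μ ρH v, hw, inner_zero_left]
        have hfpos : IsPositiveType f := by
          set S := orbitSpan ρH v with hS
          set σ := subrep ρH S (orbitSpan_invariant ρH v) (isClosed_orbitSpan ρH v) with hσ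
          haveI : SeparableSpace σ.E := separable_orbitSpan ρH v
          obtain ⟨σ', e, he⟩ := exists_smallRep σ
          refine ⟨σ', e.symm ⟨v, mem_orbitSpan_self ρH v⟩, ?_⟩
          intro x
          set vS : σ.E := (⟨v, mem_orbitSpan_self ρH v⟩ : ↥(orbitSpan ρH v))
          have h1 : (⟪σ'.π x (e.symm vS), e.symm vS⟫ : ℂ) = ⟪e (σ'.π x (e.symm vS)), e (e.symm vS)⟫ :=
            (e.inner_map_map _ _).symm
          rw [h1, he, e.apply_symm_apply]
          have h2 : (⟪σ.π x vS, vS⟫ : ℂ) = ⟪((σ.π x vS : ↥(orbitSpan ρH v)) : ρH.E), v⟫ :=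
            Submodule.coe_inner _ _ _
          rw [h2, subrep_coe]
        obtain ⟨x, hxK, hxε⟩ := hcrit f hfpos hfint
        have hxG : x ∈ G := hKG hxK
        set g : ↥G := (⟨x, hxG⟩ : ↥G)
        have h1 : f x = ⟪ρ.π g v, v⟫ := by rw [hfdef]; show (⟪Pi x v, v⟫ : ℂ) = _; rw [← hPig g v]
        have h2 : ‖f x - 1‖ ≤ ‖ρ.π g v - v‖ := by
          have hvv : (1 : ℂ) = ⟪v, v⟫ := by
            rw [inner_self_eq_norm_sq_to_K, hv1]; norm_num
          rw [h1, hvv, ← inner_sub_left]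
          calc ‖(⟪ρ.π g v - v, v⟫ : ℂ)‖ ≤ ‖ρ.π g v - v‖ * ‖v‖ := norm_inner_le_norm _ _
            _ = ‖ρ.π g v - v‖ := by rw [hv1, mul_one]
        have h3 : ‖ρ.π g v - v‖ < ε := hvQ g hxK
        linarith [hxε.trans h2]
      · -- invariant part is nonzero
        refine ⟨avgVec μ ρH v, hw, ?_⟩
        intro g
        have h1 := avg_invariant μ ρH v (g : H)
        rw [← hPig g (avgVec μ ρH v)]
        exact h1
end Main
end
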